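/- arXiv:2305.03821 — 7 statements merged into one kernel-verified Lean document; each statement's English description precedes it below -/
import Mathlib

section
/- Let p_n denote the n-th prime (p_1 = 2, p_2 = 3, ...). For every integer n ≥ 2 such that p_{n-1} > 28, one has p_{n+1} < 2·p_{n-1}. -/
open Real in
/-- Adapted from `Bertrand.real_main_inequality`, with an extra factor `2 * x`. -/
theorem two_real_main_inequality {x : ℝ} (x_large : (512 : ℝ) ≤ x) :
    x * (2 * x) * (2 * x) ^ √(2 * x) * 4 ^ (2 * x / 3) ≤ 4 ^ x := by
  let f : ℝ → ℝ := fun x => log x + log (2 * x) + √(2 * x) * log (2 * x) - log 4 / 3 * x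
  have hf' : ∀ x, 0 < x → 0 < x * (2 * x) * (2 * x) ^ √(2 * x) / 4 ^ (x / 3) := fun x h =>
    div_pos (mul_pos (mul_pos h (by linarith)) (rpow_pos_of_pos (mul_pos two_pos h) _))
      (rpow_pos_of_pos four_pos _)
  have hf : ∀ x, 0 < x → f x = log (x * (2 * x) * (2 * x) ^ √(2 * x) / 4 ^ (x / 3)) := by
    intro x h5
    have h6 := mul_pos (zero_lt_two' ℝ) h5
    have h7 := rpow_pos_of_pos h6 (√(2 * x))
    rw [log_div (mul_pos (mul_pos h5 h6) h7).ne' (rpow_pos_of_pos four_pos _).ne',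
      log_mul (mul_pos h5 h6).ne' h7.ne', log_mul h5.ne' h6.ne',
      log_rpow h6, log_rpow zero_lt_four, ← mul_div_right_comm, ← mul_div, mul_comm x]
  have h5 : 0 < x := lt_of_lt_of_le (by norm_num1) x_large
  rw [← div_le_one (rpow_pos_of_pos four_pos x), ← div_div_eq_mul_div, ← rpow_sub four_pos, ←
    mul_div 2 x, mul_div_left_comm, ← mul_one_sub, (by norm_num1 : (1 : ℝ) - 2 / 3 = 1 / 3),
    mul_one_div, ← log_nonpos_iff (hf' x h5).le, ← hf x h5]
  have h : ConcaveOn ℝ (Set.Ioi 0.5) f := by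
    apply ConcaveOn.sub
    apply ConcaveOn.add
    apply ConcaveOn.add
    · exact strictConcaveOn_log_Ioi.concaveOn.subset
        (Set.Ioi_subset_Ioi (by norm_num)) (convex_Ioi 0.5)
    · exact (strictConcaveOn_log_Ioi.concaveOn.comp_linearMap
        ((2 : ℝ) • LinearMap.id)).subset
        (fun y hy => by simp only [Set.mem_preimage, LinearMap.smul_apply, LinearMap.id_coe,
          id_eq, smul_eq_mul, Set.mem_Ioi] at *; linarith) (convex_Ioi 0.5)
    · convert ((strictConcaveOn_sqrt_mul_log_Ioi.concaveOn.comp_linearMap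
        ((2 : ℝ) • LinearMap.id))) using 1
      · rfl
      · rfl
      ext x
      simp only [Set.mem_Ioi, Set.mem_preimage, LinearMap.smul_apply,
        LinearMap.id_coe, id_eq, smul_eq_mul]
      rw [← mul_lt_mul_iff_right₀ (two_pos)]
      norm_num1
      rfl
      rfl
    apply ConvexOn.smul
    · refine div_nonneg (log_nonneg (by norm_num1)) (by norm_num1)
    · exact convexOn_id (convex_Ioi (0.5 : ℝ))
  suffices ∃ x1 x2, 0.5 < x1 ∧ x1 < x2 ∧ x2 ≤ x ∧ 0 ≤ f x1 ∧ f x2 ≤ 0 by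
    obtain ⟨x1, x2, h1, h2, h0, h3, h4⟩ := this
    exact (h.right_le_of_le_left'' h1 ((h1.trans h2).trans_le h0) h2 h0 (h4.trans h3)).trans h4
  refine ⟨18, 512, by norm_num1, by norm_num1, x_large, ?_, ?_⟩
  · have : √(2 * 18 : ℝ) = 6 := (sqrt_eq_iff_mul_self_eq_of_pos (by norm_num1)).mpr (by norm_num1)
    rw [hf _ (by norm_num1), log_nonneg_iff (by positivity), this, one_le_div (by norm_num1)]
    norm_num1
  · have : √(2 * 512) = 32 :=
      (sqrt_eq_iff_mul_self_eq_of_pos (by norm_num1)).mpr (by norm_num1)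
    rw [hf _ (by norm_num1), log_nonpos_iff (hf' _ (by norm_num1)).le, this,
        div_le_one (by positivity)]
    conv in 512 => equals 2 ^ 9 => norm_num1
    conv in 2 * 512 => equals 2 ^ 10 => norm_num1
    conv in 32 => rw [← Nat.cast_ofNat]
    rw [show ((2:ℝ) * 512) = 2 ^ 10 by norm_num]
    rw [rpow_natCast, ← pow_mul, ← pow_add, ← pow_add]
    conv in 4 => equals 2 ^ (2 : ℝ) => rw [rpow_two]; norm_num1
    rw [← rpow_mul, ← rpow_natCast]
    on_goal 1 => apply rpow_le_rpow_of_exponent_le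
    all_goals norm_num1

section
open Nat

theorem two_bertrand_main_inequality {n : ℕ} (n_large : 512 ≤ n) :
    n * (2 * n) * (2 * n) ^ Nat.sqrt (2 * n) * 4 ^ (2 * n / 3) ≤ 4 ^ n := by
  rw [← @cast_le ℝ]
  simp only [cast_mul, cast_pow, Nat.cast_ofNat, ← Real.rpow_natCast]
  refine _root_.trans ?_ (two_real_main_inequality (by exact_mod_cast n_large))
  gcongr
  · have n2_pos : 0 < 2 * n := by positivity
    exact mod_cast n2_pos
  · exact mod_cast Real.nat_sqrt_le_real_sqrt
  · norm_num1
  · exact cast_div_le.trans (by norm_cast)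

/-- Bound on the product of small prime powers in the factorization of `centralBinom n`;
this is extracted from Mathlib's `Nat.centralBinom_le_of_no_bertrand_prime`. -/
theorem small_prod_le (n : ℕ) (n_large : 2 < n) :
    ∏ x ∈ Finset.range (2 * n / 3 + 1), x ^ (centralBinom n).factorization x
      ≤ (2 * n) ^ Nat.sqrt (2 * n) * 4 ^ (2 * n / 3) := by
  have n_pos : 0 < n := (Nat.zero_le _).trans_lt n_large
  have n2_pos : 1 ≤ 2 * n := mul_pos (zero_lt_two' ℕ) n_pos
  let S := (Finset.range (2 * n / 3 + 1)).filter Nat.Prime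
  let f x := x ^ n.centralBinom.factorization x
  have : ∏ x ∈ S, f x = ∏ x ∈ Finset.range (2 * n / 3 + 1), f x := by
    refine Finset.prod_filter_of_ne fun p _ h => ?_
    contrapose! h; dsimp only [f]
    rw [factorization_eq_zero_of_not_prime n.centralBinom h, _root_.pow_zero]
  rw [← this, ← Finset.prod_filter_mul_prod_filter_not S (· ≤ Nat.sqrt (2 * n))]
  apply mul_le_mul'
  · refine (Finset.prod_le_prod' fun p _ => (?_ : f p ≤ 2 * n)).trans ?_
    · exact pow_factorization_choose_le (mul_pos two_pos n_pos)
    have : (Finset.Icc 1 (Nat.sqrt (2 * n))).card = Nat.sqrt (2 * n) := by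
      rw [card_Icc, Nat.add_sub_cancel]
    rw [Finset.prod_const]
    refine pow_right_mono₀ n2_pos ((Finset.card_le_card fun x hx => ?_).trans this.le)
    obtain ⟨h1, h2⟩ := Finset.mem_filter.1 hx
    exact Finset.mem_Icc.mpr ⟨(Finset.mem_filter.1 h1).2.one_lt.le, h2⟩
  · refine le_trans ?_ (primorial_le_4_pow (2 * n / 3))
    refine (Finset.prod_le_prod' fun p hp => (?_ : f p ≤ p)).trans ?_
    · obtain ⟨h1, h2⟩ := Finset.mem_filter.1 hp
      refine (pow_right_mono₀ (Finset.mem_filter.1 h1).2.one_lt.le ?_).trans (pow_one p).le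
      exact Nat.factorization_choose_le_one (sqrt_lt'.mp <| not_le.1 h2)
    refine Finset.prod_le_prod_of_subset_of_one_le' (Finset.filter_subset _ _) ?_
    exact fun p hp _ => (Finset.mem_filter.1 hp).2.one_lt.le

theorem large_prod_le (n : ℕ) (n_large : 512 ≤ n)
    (no_two : ¬∃ p q : ℕ, p.Prime ∧ q.Prime ∧ n < p ∧ p < q ∧ q ≤ 2 * n) :
    ∏ x ∈ Finset.Ico (2 * n / 3 + 1) (2 * n + 1), x ^ (centralBinom n).factorization x
      ≤ 2 * n := by
  set f : ℕ → ℕ := fun x => x ^ (centralBinom n).factorization x with hf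
  set T := Finset.Ico (2 * n / 3 + 1) (2 * n + 1) with hT
  have key : ∀ x ∈ T, f x ≠ 1 → x.Prime ∧ n < x ∧ x ≤ 2 * n ∧ f x ≤ 2 * n := by
    intro x hx hfx
    rw [Finset.mem_Ico] at hx
    have hprime : x.Prime := by
      by_contra hnp
      exact hfx (by simp [hf, factorization_eq_zero_of_not_prime n.centralBinom hnp])
    have hx2 : x ≤ 2 * n := by omega
    have hxn : n < x := by
      by_contra hle
      push_neg at hle
      have h3 : 2 * n < 3 * x := by omega
      have h0 : (centralBinom n).factorization x = 0 :=
        Nat.factorization_centralBinom_of_two_mul_self_lt_three_mul (by omega) hle h3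
      exact hfx (by simp [hf, h0])
    have hsq : Nat.sqrt (2 * n) < x := by
      have h3le : 3 ≤ Nat.sqrt (2 * n) := Nat.le_sqrt.mpr (by omega)
      have h1 := Nat.sqrt_le' (2 * n)
      have : Nat.sqrt (2 * n) ≤ 2 * n / 3 :=
        (Nat.le_div_iff_mul_le (by norm_num)).mpr (by nlinarith)
      omega
    have hle1 : (centralBinom n).factorization x ≤ 1 :=
      Nat.factorization_choose_le_one (sqrt_lt'.mp hsq)
    refine ⟨hprime, hxn, hx2, ?_⟩
    calc f x ≤ x ^ 1 := pow_le_pow_right₀ hprime.one_lt.le hle1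
    _ ≤ 2 * n := by simpa using hx2
  -- the set of x with f x ≠ 1 has at most one element
  have card1 : ∀ x ∈ T, ∀ y ∈ T, f x ≠ 1 → f y ≠ 1 → x = y := by
    intro x hx y hy hfx hfy
    obtain ⟨hxp, hxn, hx2, -⟩ := key x hx hfx
    obtain ⟨hyp, hyn, hy2, -⟩ := key y hy hfy
    by_contra hne
    rcases Nat.lt_or_ge x y with h | h
    · exact no_two ⟨x, y, hxp, hyp, hxn, h, hy2⟩
    · exact no_two ⟨y, x, hyp, hxp, hyn, by omega, hx2⟩
  rw [← Finset.prod_filter_ne_one (s := T) (f := f)]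
  rcases Finset.eq_empty_or_nonempty (T.filter fun x => f x ≠ 1) with he | ⟨a, ha⟩
  · rw [he, Finset.prod_empty]; omega
  · have hsub : T.filter (fun x => f x ≠ 1) = {a} := by
      apply Finset.eq_singleton_iff_unique_mem.mpr
      refine ⟨ha, fun y hy => ?_⟩
      rw [Finset.mem_filter] at hy ha
      exact card1 y hy.1 a ha.1 hy.2 ha.2
    rw [hsub, Finset.prod_singleton]
    rw [Finset.mem_filter] at ha
    exact (key a ha.1 ha.2).2.2.2

/-- Two primes strictly between `n` and `2n` (inclusive), for `n ≥ 512`. -/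
theorem exists_two_primes_eventually (n : ℕ) (n_large : 512 ≤ n) :
    ∃ p q : ℕ, p.Prime ∧ q.Prime ∧ n < p ∧ p < q ∧ q ≤ 2 * n := by
  by_contra no_two
  have H1 : n * (2 * n) * (2 * n) ^ Nat.sqrt (2 * n) * 4 ^ (2 * n / 3) ≤ 4 ^ n :=
    two_bertrand_main_inequality n_large
  have H2 : 4 ^ n < n * n.centralBinom :=
    Nat.four_pow_lt_mul_centralBinom n (le_trans (by norm_num1) n_large)
  have H3 : n.centralBinom ≤ 2 * n * ((2 * n) ^ Nat.sqrt (2 * n) * 4 ^ (2 * n / 3)) := by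
    have hsplit : n.centralBinom
        = (∏ x ∈ Finset.range (2 * n / 3 + 1), x ^ (centralBinom n).factorization x)
          * ∏ x ∈ Finset.Ico (2 * n / 3 + 1) (2 * n + 1),
              x ^ (centralBinom n).factorization x := by
      rw [Finset.prod_range_mul_prod_Ico _ (show 2 * n / 3 + 1 ≤ 2 * n + 1 by omega)]
      exact (n.prod_pow_factorization_centralBinom).symm
    calc n.centralBinom
        ≤ ((2 * n) ^ Nat.sqrt (2 * n) * 4 ^ (2 * n / 3)) * (2 * n) := by
          rw [hsplit]
          exact Nat.mul_le_mul (small_prod_le n (by omega)) (large_prod_le n n_large no_two)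
      _ = 2 * n * ((2 * n) ^ Nat.sqrt (2 * n) * 4 ^ (2 * n / 3)) := by ring
  have hfin : n * (n.centralBinom) ≤ 4 ^ n := by
    calc n * n.centralBinom ≤ n * (2 * n * ((2 * n) ^ Nat.sqrt (2 * n) * 4 ^ (2 * n / 3))) :=
          Nat.mul_le_mul_left n H3
      _ = n * (2 * n) * (2 * n) ^ Nat.sqrt (2 * n) * 4 ^ (2 * n / 3) := by ring
      _ ≤ 4 ^ n := H1
  omega

theorem two_primes_succ {n : ℕ} (q : ℕ) {p p' : ℕ} (hp : p.Prime) (hp' : p'.Prime)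
    (hpp' : p < p') (cover : p' ≤ 2 * q)
    (H : n < q → ∃ a b : ℕ, a.Prime ∧ b.Prime ∧ n < a ∧ a < b ∧ b ≤ 2 * n) (hn : n < p) :
    ∃ a b : ℕ, a.Prime ∧ b.Prime ∧ n < a ∧ a < b ∧ b ≤ 2 * n := by
  by_cases h : p' ≤ 2 * n
  · exact ⟨p, p', hp, hp', hn, hpp', h⟩
  · exact H (by omega)

theorem exists_two_primes (n : ℕ) (hn : 6 ≤ n) :
    ∃ p q : ℕ, p.Prime ∧ q.Prime ∧ n < p ∧ p < q ∧ q ≤ 2 * n := by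
  rcases lt_or_ge n 512 with h | h
  · refine two_primes_succ 262 (p := 521) (p' := 523) (by norm_num) (by norm_num) (by norm_num) (by norm_num)
      (fun h => ?_) (by omega : n < 521)
    refine two_primes_succ 135 (p := 263) (p' := 269) (by norm_num) (by norm_num) (by norm_num) (by norm_num)
      (fun h => ?_) (by omega : n < 263)
    refine two_primes_succ 70 (p := 137) (p' := 139) (by norm_num) (by norm_num) (by norm_num) (by norm_num)
      (fun h => ?_) (by omega : n < 137)
    refine two_primes_succ 37 (p := 71) (p' := 73) (by norm_num) (by norm_num) (by norm_num) (by norm_num)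
      (fun h => ?_) (by omega : n < 71)
    refine two_primes_succ 21 (p := 37) (p' := 41) (by norm_num) (by norm_num) (by norm_num) (by norm_num)
      (fun h => ?_) (by omega : n < 37)
    refine two_primes_succ 15 (p := 23) (p' := 29) (by norm_num) (by norm_num) (by norm_num) (by norm_num)
      (fun h => ?_) (by omega : n < 23)
    refine two_primes_succ 10 (p := 17) (p' := 19) (by norm_num) (by norm_num) (by norm_num) (by norm_num)
      (fun h => ?_) (by omega : n < 17)
    refine two_primes_succ 7 (p := 11) (p' := 13) (by norm_num) (by norm_num) (by norm_num) (by norm_num)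
      (fun h => ?_) (by omega : n < 11)
    refine two_primes_succ 6 (p := 7) (p' := 11) (by norm_num) (by norm_num) (by norm_num) (by norm_num)
      (fun h => ?_) (by omega : n < 7)
    omega
  · exact exists_two_primes_eventually n h

/-- The n-th prime, 1-indexed: `nthPrime 1 = 2`, `nthPrime 2 = 3`, ... -/
noncomputable def nthPrime (n : ℕ) : ℕ := Nat.nth Nat.Prime (n - 1)

theorem next_prime_lt_two_mul (n : ℕ) (hn : 2 ≤ n) (h28 : 28 < nthPrime (n - 1)) :
    nthPrime (n + 1) < 2 * nthPrime (n - 1) := by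
  have hinf : (setOf Nat.Prime).Infinite := Nat.infinite_setOf_prime
  unfold nthPrime at *
  rw [show n - 1 - 1 = n - 2 by omega] at *
  rw [show n + 1 - 1 = n by omega]
  set m := Nat.nth Nat.Prime (n - 2) with hm
  have hmp : m.Prime := Nat.nth_mem_of_infinite hinf _
  obtain ⟨p, q, hp, hq, hmp', hpq, hq2⟩ := exists_two_primes m (by omega)
  have hq2' : q < 2 * m := by
    rcases eq_or_lt_of_le hq2 with rfl | h
    · have := hq.eq_one_or_self_of_dvd 2 ⟨m, rfl⟩
      rcases this with h | h <;> omega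
    · exact h
  have hcm : Nat.count Nat.Prime m = n - 2 := Nat.count_nth_of_infinite hinf _
  have h1 : Nat.count Nat.Prime (m + 1) = n - 2 + 1 := by
    rw [Nat.count_succ, hcm, if_pos hmp]
  have h2 : Nat.count Nat.Prime (p + 1) = Nat.count Nat.Prime p + 1 := by
    rw [Nat.count_succ, if_pos hp]
  have h3 : Nat.count Nat.Prime (m + 1) ≤ Nat.count Nat.Prime p := Nat.count_monotone _ (by omega)
  have h4 : Nat.count Nat.Prime (p + 1) ≤ Nat.count Nat.Prime q := Nat.count_monotone _ (by omega)
  have hnq : n ≤ Nat.count Nat.Prime q := by omega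
  have : Nat.nth Nat.Prime n ≤ Nat.nth Nat.Prime (Nat.count Nat.Prime q) :=
    (Nat.nth_le_nth hinf).mpr hnq
  rw [Nat.nth_count hq] at this
  omega

end
end

section
/- Let p_n denote the n-th prime (p_1 = 2, p_2 = 3, ...). For every integer n ≥ 6, p_{n-2} + p_n ≥ p_{n+2}, and this fails for n = 5 (i.e., p_3 + p_5 < p_7). Hence the least positive integer N such that p_{n-2} + p_n ≥ p_{n+2} holds for all n ≥ N is N = 6. -/
open Real

namespace MyNagura


theorem real_main_inequality {x : ℝ} (x_large : (648 : ℝ) ≤ x) :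
    x * (2 * x) ^ (√(2 * x) + 3) * 4 ^ (2 * x / 3) ≤ 4 ^ x := by
  let f : ℝ → ℝ := fun x => log x + √(2 * x) * log (2 * x) + 3 * log (2 * x) - log 4 / 3 * x
  have hf' : ∀ x, 0 < x → 0 < x * (2 * x) ^ (√(2 * x) + 3) / 4 ^ (x / 3) := fun x h =>
    div_pos (mul_pos h (rpow_pos_of_pos (mul_pos two_pos h) _)) (rpow_pos_of_pos four_pos _)
  have hf : ∀ x, 0 < x → f x = log (x * (2 * x) ^ (√(2 * x) + 3) / 4 ^ (x / 3)) := by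
    intro x h5
    have h6 := mul_pos (zero_lt_two' ℝ) h5
    have h7 := rpow_pos_of_pos h6 (√(2 * x) + 3)
    rw [log_div (mul_pos h5 h7).ne' (rpow_pos_of_pos four_pos _).ne', log_mul h5.ne' h7.ne',
      log_rpow h6, log_rpow zero_lt_four]
    ring
  have h5 : 0 < x := lt_of_lt_of_le (by norm_num1) x_large
  rw [← div_le_one (rpow_pos_of_pos four_pos x), ← div_div_eq_mul_div, ← rpow_sub four_pos, ←
    mul_div 2 x, mul_div_left_comm, ← mul_one_sub, (by norm_num1 : (1 : ℝ) - 2 / 3 = 1 / 3),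
    mul_one_div, ← log_nonpos_iff (hf' x h5).le, ← hf x h5]
  have h : ConcaveOn ℝ (Set.Ioi 0.5) f := by
    apply ConcaveOn.sub
    apply ConcaveOn.add
    · apply ConcaveOn.add
      · exact strictConcaveOn_log_Ioi.concaveOn.subset
          (Set.Ioi_subset_Ioi (by norm_num)) (convex_Ioi 0.5)
      convert ((strictConcaveOn_sqrt_mul_log_Ioi.concaveOn.comp_linearMap
        ((2 : ℝ) • LinearMap.id))) using 1
      iterate 2 rfl
      ext x
      simp only [Set.mem_Ioi, Set.mem_preimage, LinearMap.smul_apply,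
        LinearMap.id_coe, id_eq, smul_eq_mul]
      rw [← mul_lt_mul_iff_right₀ (two_pos)]
      norm_num1
      rfl
      ext y; simp
    · have : ConcaveOn ℝ ((fun x : ℝ => 2 * x) ⁻¹' (Set.Ioi 0)) (fun x : ℝ => log (2 * x)) := by
        exact strictConcaveOn_log_Ioi.concaveOn.comp_linearMap ((2 : ℝ) • LinearMap.id)
      have hsub : (Set.Ioi (0.5 : ℝ)) ⊆ ((fun x : ℝ => 2 * x) ⁻¹' (Set.Ioi 0)) := by
        intro y hy
        simp only [Set.mem_preimage, Set.mem_Ioi] at *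
        linarith
      exact (this.subset hsub (convex_Ioi 0.5)).smul (by norm_num)
    apply ConvexOn.smul
    · refine div_nonneg (log_nonneg (by norm_num1)) (by norm_num1)
    · exact convexOn_id (convex_Ioi (0.5 : ℝ))
  suffices ∃ x1 x2, 0.5 < x1 ∧ x1 < x2 ∧ x2 ≤ x ∧ 0 ≤ f x1 ∧ f x2 ≤ 0 by
    obtain ⟨x1, x2, h1, h2, h0, h3, h4⟩ := this
    exact (h.right_le_of_le_left'' h1 ((h1.trans h2).trans_le h0) h2 h0 (h4.trans h3)).trans h4
  refine ⟨18, 648, by norm_num1, by norm_num1, x_large, ?_, ?_⟩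
  · have hsq : √(2 * 18 : ℝ) = 6 := (sqrt_eq_iff_mul_self_eq_of_pos (by norm_num1)).mpr (by norm_num1)
    rw [hf _ (by norm_num1), log_nonneg_iff (hf' _ (by norm_num1)), hsq,
      (by norm_num1 : (6 : ℝ) + 3 = ((9 : ℕ) : ℝ)), rpow_natCast,
      (by norm_num1 : (18 : ℝ) / 3 = ((6 : ℕ) : ℝ)), rpow_natCast, one_le_div (by norm_num1)]
    norm_num1
  · have hsq : √(2 * 648 : ℝ) = 36 :=
      (sqrt_eq_iff_mul_self_eq_of_pos (by norm_num1)).mpr (by norm_num1)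
    rw [hf _ (by norm_num1), log_nonpos_iff (hf' _ (by norm_num1)).le, hsq,
      (by norm_num1 : (36 : ℝ) + 3 = ((39 : ℕ) : ℝ)), rpow_natCast,
      (by norm_num1 : (648 : ℝ) / 3 = ((216 : ℕ) : ℝ)), rpow_natCast,
      div_le_one (by positivity)]
    norm_num1


theorem main_inequality {n : ℕ} (n_large : 648 ≤ n) :
    n * (2 * n) ^ (Nat.sqrt (2 * n) + 3) * 4 ^ (2 * n / 3) ≤ 4 ^ n := by
  rw [← @Nat.cast_le ℝ]
  simp only [Nat.cast_add, Nat.cast_one, Nat.cast_mul, Nat.cast_pow, ← Real.rpow_natCast]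
  refine _root_.trans ?_ (real_main_inequality (by exact_mod_cast n_large))
  gcongr
  · push_cast
    gcongr
    · have n2_pos : 0 < 2 * n := by positivity
      exact_mod_cast n2_pos
    · exact_mod_cast Real.nat_sqrt_le_real_sqrt
  · push_cast
    gcongr
    · norm_num1
    · exact _root_.trans Nat.cast_div_le (by norm_cast)

theorem centralBinom_le_of_few_primes (n : ℕ) (n_large : 2 < n)
    (h : ((Finset.Ioc n (2 * n)).filter Nat.Prime).card ≤ 3) :
    Nat.centralBinom n ≤ (2 * n) ^ (Nat.sqrt (2 * n) + 3) * 4 ^ (2 * n / 3) := by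
  have n_pos : 0 < n := (Nat.zero_le _).trans_lt n_large
  have n2_pos : 1 ≤ 2 * n := mul_pos (zero_lt_two' ℕ) n_pos
  set e : ℕ → ℕ := fun x => (Nat.centralBinom n).factorization x with he
  have main := n.prod_pow_factorization_centralBinom
  rw [← main, ← Finset.prod_filter_mul_prod_filter_not (Finset.range (2 * n + 1))
    (fun x => x ≤ 2 * n / 3), pow_add, mul_right_comm ((2*n) ^ Nat.sqrt (2*n))]
  have hA : ∏ x ∈ (Finset.range (2 * n + 1)).filter (fun x => x ≤ 2 * n / 3), x ^ e x
      ≤ (2 * n) ^ Nat.sqrt (2 * n) * 4 ^ (2 * n / 3) := by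
    have hset : (Finset.range (2 * n + 1)).filter (fun x => x ≤ 2 * n / 3)
        = Finset.range (2 * n / 3 + 1) := by
      ext x
      simp only [Finset.mem_filter, Finset.mem_range]
      constructor
      · rintro ⟨_, h2⟩; omega
      · intro hx
        have := Nat.div_le_self (2 * n) 3
        omega
    rw [hset]
    -- now copy the mathlib bound
    let S := (Finset.range (2 * n / 3 + 1)).filter Nat.Prime
    let f := fun x => x ^ e x
    have : ∏ x ∈ S, f x = ∏ x ∈ Finset.range (2 * n / 3 + 1), f x := by
      refine Finset.prod_filter_of_ne fun p _ hp => ?_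
      contrapose! hp; dsimp only [f, e]
      rw [Nat.factorization_eq_zero_of_not_prime n.centralBinom hp, _root_.pow_zero]
    rw [← this, ← Finset.prod_filter_mul_prod_filter_not S (· ≤ Nat.sqrt (2 * n))]
    apply Nat.mul_le_mul
    · refine (Finset.prod_le_prod' fun p _ => (?_ : f p ≤ 2 * n)).trans ?_
      · exact Nat.pow_factorization_choose_le (mul_pos two_pos n_pos)
      have : (Finset.Icc 1 (Nat.sqrt (2 * n))).card = Nat.sqrt (2 * n) := by
        rw [Nat.card_Icc, Nat.add_sub_cancel]
      rw [Finset.prod_const]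
      refine pow_right_mono₀ n2_pos ((Finset.card_le_card fun x hx => ?_).trans this.le)
      obtain ⟨h1, h2⟩ := Finset.mem_filter.1 hx
      exact Finset.mem_Icc.mpr ⟨(Finset.mem_filter.1 h1).2.one_lt.le, h2⟩
    · refine le_trans ?_ (primorial_le_4_pow (2 * n / 3))
      refine (Finset.prod_le_prod' fun p hp => (?_ : f p ≤ p)).trans ?_
      · obtain ⟨h1, h2⟩ := Finset.mem_filter.1 hp
        refine (pow_right_mono₀ (Finset.mem_filter.1 h1).2.one_lt.le ?_).trans (pow_one p).le
        exact Nat.factorization_choose_le_one (Nat.sqrt_lt'.mp <| not_le.1 h2)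
      refine Finset.prod_le_prod_of_subset_of_one_le' (Finset.filter_subset _ _) ?_
      exact fun p hp _ => (Finset.mem_filter.1 hp).2.one_lt.le
  have hB : ∏ x ∈ (Finset.range (2 * n + 1)).filter (fun x => ¬ x ≤ 2 * n / 3), x ^ e x
      ≤ (2 * n) ^ 3 := by
    set T := (Finset.Ioc n (2 * n)).filter Nat.Prime with hT
    calc ∏ x ∈ (Finset.range (2 * n + 1)).filter (fun x => ¬ x ≤ 2 * n / 3), x ^ e x
        ≤ ∏ x ∈ (Finset.range (2 * n + 1)).filter (fun x => ¬ x ≤ 2 * n / 3),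
            (if x ∈ T then 2 * n else 1) := by
          refine Finset.prod_le_prod' fun x hx => ?_
          obtain ⟨hx1, hx2⟩ := Finset.mem_filter.1 hx
          rw [Finset.mem_range] at hx1
          by_cases hxT : x ∈ T
          · rw [if_pos hxT]
            obtain ⟨hio, hpr⟩ := Finset.mem_filter.1 hxT
            rw [Finset.mem_Ioc] at hio
            have hsq : 2 * n < x ^ 2 := by
              calc 2 * n < (n + 1) ^ 2 := by nlinarith
              _ ≤ x ^ 2 := Nat.pow_le_pow_left (by omega) 2
            have he1 : e x ≤ 1 := Nat.factorization_choose_le_one hsq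
            calc x ^ e x ≤ x ^ 1 := Nat.pow_le_pow_right hpr.one_lt.le he1
            _ ≤ 2 * n := by rw [pow_one]; exact hio.2
          · rw [if_neg hxT]
            have hez : e x = 0 := by
              by_cases hpr : Nat.Prime x
              · have hxn : x ≤ n := by
                  by_contra hxn
                  exact hxT (Finset.mem_filter.2 ⟨Finset.mem_Ioc.2 ⟨by omega, by omega⟩, hpr⟩)
                have h3x : 2 * n < 3 * x := by omega
                exact Nat.factorization_centralBinom_of_two_mul_self_lt_three_mul
                  n_large hxn h3x
              · exact Nat.factorization_eq_zero_of_not_prime _ hpr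
            rw [hez, _root_.pow_zero]
      _ = ∏ x ∈ ((Finset.range (2 * n + 1)).filter (fun x => ¬ x ≤ 2 * n / 3)) ∩ T,
            (2 * n) := Finset.prod_ite_mem _ _ _
      _ = (2 * n) ^ (((Finset.range (2 * n + 1)).filter (fun x => ¬ x ≤ 2 * n / 3)) ∩ T).card :=
            Finset.prod_const _
      _ ≤ (2 * n) ^ 3 := by
            refine Nat.pow_le_pow_right (by omega) ?_
            exact le_trans (Finset.card_le_card (Finset.inter_subset_right)) h
  exact Nat.mul_le_mul hA hB

theorem four_primes {n : ℕ} (n_large : 648 ≤ n) :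
    4 ≤ ((Finset.Ioc n (2 * n)).filter Nat.Prime).card := by
  by_contra hlt
  push_neg at hlt
  have h := centralBinom_le_of_few_primes n (by omega) (by omega)
  have H1 : n * (2 * n) ^ (Nat.sqrt (2 * n) + 3) * 4 ^ (2 * n / 3) ≤ 4 ^ n :=
    main_inequality n_large
  have H2 : 4 ^ n < n * n.centralBinom :=
    Nat.four_pow_lt_mul_centralBinom n (by omega)
  rw [mul_assoc] at H1
  exact not_le.2 H2 ((Nat.mul_le_mul_left n h).trans H1)


theorem count_split {m n : ℕ} (h : m ≤ n) :
    Nat.count Nat.Prime n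
      = Nat.count Nat.Prime m + ((Finset.Ico m n).filter Nat.Prime).card := by
  rw [Nat.count_eq_card_filter_range, Nat.count_eq_card_filter_range, Finset.range_eq_Ico, ← Finset.Ico_union_Ico_eq_Ico (Nat.zero_le m) h, Finset.filter_union,
    Finset.card_union_of_disjoint]
  rw [Finset.range_eq_Ico]
  exact Finset.disjoint_filter_filter (p := Nat.Prime) (q := Nat.Prime) (Finset.Ico_disjoint_Ico_consecutive 0 m n)

theorem nth_add_four {k : ℕ} (h : 648 ≤ Nat.nth Nat.Prime k) :
    Nat.nth Nat.Prime (k + 4) ≤ 2 * Nat.nth Nat.Prime k := by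
  set p := Nat.nth Nat.Prime k with hp
  have hcount : Nat.count Nat.Prime (2 * p + 1)
      = (k + 1) + ((Finset.Ico (p + 1) (2 * p + 1)).filter Nat.Prime).card := by
    rw [count_split (show p + 1 ≤ 2 * p + 1 by omega), Nat.count_nth_succ_of_infinite Nat.infinite_setOf_prime]
  have hIco : Finset.Ico (p + 1) (2 * p + 1) = Finset.Ioc p (2 * p) := by
    ext x
    simp only [Finset.mem_Ico, Finset.mem_Ioc]
    omega
  have h4 := four_primes h
  have : k + 4 < Nat.count Nat.Prime (2 * p + 1) := by
    rw [hcount, hIco]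
    omega
  have := Nat.nth_lt_of_lt_count this
  omega

theorem key {n : ℕ} (h6 : 6 ≤ n) (h : 648 ≤ Nat.nth Nat.Prime (n - 3)) :
    Nat.nth Nat.Prime (n - 3) + Nat.nth Nat.Prime (n - 1) ≥ Nat.nth Nat.Prime (n + 1) := by
  have h1 : Nat.nth Nat.Prime (n + 1) ≤ 2 * Nat.nth Nat.Prime (n - 3) := by
    have := nth_add_four h
    rwa [show n - 3 + 4 = n + 1 by omega] at this
  have hmono : Nat.nth Nat.Prime (n - 3) ≤ Nat.nth Nat.Prime (n - 1) :=
    Nat.nth_monotone Nat.infinite_setOf_prime (by omega)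
  have h2 : Nat.nth Nat.Prime (n + 1) ≤ 2 * Nat.nth Nat.Prime (n - 1) := by
    have := nth_add_four (le_trans h hmono)
    rw [show n - 1 + 4 = n + 3 by omega] at this
    exact le_trans (Nat.nth_monotone Nat.infinite_setOf_prime (by omega)) this
  omega



theorem nth_step {k a b : ℕ} (ha : Nat.nth Nat.Prime k = a) (hb : Nat.Prime b) (hab : a < b)
    (hmid : ∀ c, a < c → c < b → ¬ Nat.Prime c) : Nat.nth Nat.Prime (k + 1) = b := by
  have hempty : (Finset.Ico (a + 1) b).filter Nat.Prime = ∅ := by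
    refine Finset.filter_eq_empty_iff.mpr fun c hc => ?_
    rw [Finset.mem_Ico] at hc
    exact hmid c (by omega) hc.2
  have hcb : Nat.count Nat.Prime b = k + 1 := by
    rw [count_split (show a + 1 ≤ b by omega), hempty, Finset.card_empty, ← ha,
      Nat.count_nth_succ_of_infinite Nat.infinite_setOf_prime]
  rw [← hcb, Nat.nth_count hb]


theorem t0 : Nat.nth Nat.Prime 0 = 2 := Nat.nth_prime_zero_eq_two

theorem t1 : Nat.nth Nat.Prime 1 = 3 :=
  nth_step t0 (by norm_num) (by norm_num) (by intro c h1 h2; interval_cases c <;> norm_num)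

theorem t2 : Nat.nth Nat.Prime 2 = 5 :=
  nth_step t1 (by norm_num) (by norm_num) (by intro c h1 h2; interval_cases c <;> norm_num)

theorem t3 : Nat.nth Nat.Prime 3 = 7 :=
  nth_step t2 (by norm_num) (by norm_num) (by intro c h1 h2; interval_cases c <;> norm_num)

theorem t4 : Nat.nth Nat.Prime 4 = 11 :=
  nth_step t3 (by norm_num) (by norm_num) (by intro c h1 h2; interval_cases c <;> norm_num)

theorem t5 : Nat.nth Nat.Prime 5 = 13 :=
  nth_step t4 (by norm_num) (by norm_num) (by intro c h1 h2; interval_cases c <;> norm_num)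

theorem t6 : Nat.nth Nat.Prime 6 = 17 :=
  nth_step t5 (by norm_num) (by norm_num) (by intro c h1 h2; interval_cases c <;> norm_num)

theorem t7 : Nat.nth Nat.Prime 7 = 19 :=
  nth_step t6 (by norm_num) (by norm_num) (by intro c h1 h2; interval_cases c <;> norm_num)

theorem t8 : Nat.nth Nat.Prime 8 = 23 :=
  nth_step t7 (by norm_num) (by norm_num) (by intro c h1 h2; interval_cases c <;> norm_num)

theorem t9 : Nat.nth Nat.Prime 9 = 29 :=
  nth_step t8 (by norm_num) (by norm_num) (by intro c h1 h2; interval_cases c <;> norm_num)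

theorem t10 : Nat.nth Nat.Prime 10 = 31 :=
  nth_step t9 (by norm_num) (by norm_num) (by intro c h1 h2; interval_cases c <;> norm_num)

theorem t11 : Nat.nth Nat.Prime 11 = 37 :=
  nth_step t10 (by norm_num) (by norm_num) (by intro c h1 h2; interval_cases c <;> norm_num)

theorem t12 : Nat.nth Nat.Prime 12 = 41 :=
  nth_step t11 (by norm_num) (by norm_num) (by intro c h1 h2; interval_cases c <;> norm_num)

theorem t13 : Nat.nth Nat.Prime 13 = 43 :=
  nth_step t12 (by norm_num) (by norm_num) (by intro c h1 h2; interval_cases c <;> norm_num)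

theorem t14 : Nat.nth Nat.Prime 14 = 47 :=
  nth_step t13 (by norm_num) (by norm_num) (by intro c h1 h2; interval_cases c <;> norm_num)

theorem t15 : Nat.nth Nat.Prime 15 = 53 :=
  nth_step t14 (by norm_num) (by norm_num) (by intro c h1 h2; interval_cases c <;> norm_num)

theorem t16 : Nat.nth Nat.Prime 16 = 59 :=
  nth_step t15 (by norm_num) (by norm_num) (by intro c h1 h2; interval_cases c <;> norm_num)

theorem t17 : Nat.nth Nat.Prime 17 = 61 :=
  nth_step t16 (by norm_num) (by norm_num) (by intro c h1 h2; interval_cases c <;> norm_num)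

theorem t18 : Nat.nth Nat.Prime 18 = 67 :=
  nth_step t17 (by norm_num) (by norm_num) (by intro c h1 h2; interval_cases c <;> norm_num)

theorem t19 : Nat.nth Nat.Prime 19 = 71 :=
  nth_step t18 (by norm_num) (by norm_num) (by intro c h1 h2; interval_cases c <;> norm_num)

theorem t20 : Nat.nth Nat.Prime 20 = 73 :=
  nth_step t19 (by norm_num) (by norm_num) (by intro c h1 h2; interval_cases c <;> norm_num)

theorem t21 : Nat.nth Nat.Prime 21 = 79 :=
  nth_step t20 (by norm_num) (by norm_num) (by intro c h1 h2; interval_cases c <;> norm_num)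

theorem t22 : Nat.nth Nat.Prime 22 = 83 :=
  nth_step t21 (by norm_num) (by norm_num) (by intro c h1 h2; interval_cases c <;> norm_num)

theorem t23 : Nat.nth Nat.Prime 23 = 89 :=
  nth_step t22 (by norm_num) (by norm_num) (by intro c h1 h2; interval_cases c <;> norm_num)

theorem t24 : Nat.nth Nat.Prime 24 = 97 :=
  nth_step t23 (by norm_num) (by norm_num) (by intro c h1 h2; interval_cases c <;> norm_num)

theorem t25 : Nat.nth Nat.Prime 25 = 101 :=
  nth_step t24 (by norm_num) (by norm_num) (by intro c h1 h2; interval_cases c <;> norm_num)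

theorem t26 : Nat.nth Nat.Prime 26 = 103 :=
  nth_step t25 (by norm_num) (by norm_num) (by intro c h1 h2; interval_cases c <;> norm_num)

theorem t27 : Nat.nth Nat.Prime 27 = 107 :=
  nth_step t26 (by norm_num) (by norm_num) (by intro c h1 h2; interval_cases c <;> norm_num)

theorem t28 : Nat.nth Nat.Prime 28 = 109 :=
  nth_step t27 (by norm_num) (by norm_num) (by intro c h1 h2; interval_cases c <;> norm_num)

theorem t29 : Nat.nth Nat.Prime 29 = 113 :=
  nth_step t28 (by norm_num) (by norm_num) (by intro c h1 h2; interval_cases c <;> norm_num)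

theorem t30 : Nat.nth Nat.Prime 30 = 127 :=
  nth_step t29 (by norm_num) (by norm_num) (by intro c h1 h2; interval_cases c <;> norm_num)

theorem t31 : Nat.nth Nat.Prime 31 = 131 :=
  nth_step t30 (by norm_num) (by norm_num) (by intro c h1 h2; interval_cases c <;> norm_num)

theorem t32 : Nat.nth Nat.Prime 32 = 137 :=
  nth_step t31 (by norm_num) (by norm_num) (by intro c h1 h2; interval_cases c <;> norm_num)

theorem t33 : Nat.nth Nat.Prime 33 = 139 :=
  nth_step t32 (by norm_num) (by norm_num) (by intro c h1 h2; interval_cases c <;> norm_num)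

theorem t34 : Nat.nth Nat.Prime 34 = 149 :=
  nth_step t33 (by norm_num) (by norm_num) (by intro c h1 h2; interval_cases c <;> norm_num)

theorem t35 : Nat.nth Nat.Prime 35 = 151 :=
  nth_step t34 (by norm_num) (by norm_num) (by intro c h1 h2; interval_cases c <;> norm_num)

theorem t36 : Nat.nth Nat.Prime 36 = 157 :=
  nth_step t35 (by norm_num) (by norm_num) (by intro c h1 h2; interval_cases c <;> norm_num)

theorem t37 : Nat.nth Nat.Prime 37 = 163 :=
  nth_step t36 (by norm_num) (by norm_num) (by intro c h1 h2; interval_cases c <;> norm_num)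

theorem t38 : Nat.nth Nat.Prime 38 = 167 :=
  nth_step t37 (by norm_num) (by norm_num) (by intro c h1 h2; interval_cases c <;> norm_num)

theorem t39 : Nat.nth Nat.Prime 39 = 173 :=
  nth_step t38 (by norm_num) (by norm_num) (by intro c h1 h2; interval_cases c <;> norm_num)

theorem t40 : Nat.nth Nat.Prime 40 = 179 :=
  nth_step t39 (by norm_num) (by norm_num) (by intro c h1 h2; interval_cases c <;> norm_num)

theorem t41 : Nat.nth Nat.Prime 41 = 181 :=
  nth_step t40 (by norm_num) (by norm_num) (by intro c h1 h2; interval_cases c <;> norm_num)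

theorem t42 : Nat.nth Nat.Prime 42 = 191 :=
  nth_step t41 (by norm_num) (by norm_num) (by intro c h1 h2; interval_cases c <;> norm_num)

theorem t43 : Nat.nth Nat.Prime 43 = 193 :=
  nth_step t42 (by norm_num) (by norm_num) (by intro c h1 h2; interval_cases c <;> norm_num)

theorem t44 : Nat.nth Nat.Prime 44 = 197 :=
  nth_step t43 (by norm_num) (by norm_num) (by intro c h1 h2; interval_cases c <;> norm_num)

theorem t45 : Nat.nth Nat.Prime 45 = 199 :=
  nth_step t44 (by norm_num) (by norm_num) (by intro c h1 h2; interval_cases c <;> norm_num)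

theorem t46 : Nat.nth Nat.Prime 46 = 211 :=
  nth_step t45 (by norm_num) (by norm_num) (by intro c h1 h2; interval_cases c <;> norm_num)

theorem t47 : Nat.nth Nat.Prime 47 = 223 :=
  nth_step t46 (by norm_num) (by norm_num) (by intro c h1 h2; interval_cases c <;> norm_num)

theorem t48 : Nat.nth Nat.Prime 48 = 227 :=
  nth_step t47 (by norm_num) (by norm_num) (by intro c h1 h2; interval_cases c <;> norm_num)

theorem t49 : Nat.nth Nat.Prime 49 = 229 :=
  nth_step t48 (by norm_num) (by norm_num) (by intro c h1 h2; interval_cases c <;> norm_num)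

theorem t50 : Nat.nth Nat.Prime 50 = 233 :=
  nth_step t49 (by norm_num) (by norm_num) (by intro c h1 h2; interval_cases c <;> norm_num)

theorem t51 : Nat.nth Nat.Prime 51 = 239 :=
  nth_step t50 (by norm_num) (by norm_num) (by intro c h1 h2; interval_cases c <;> norm_num)

theorem t52 : Nat.nth Nat.Prime 52 = 241 :=
  nth_step t51 (by norm_num) (by norm_num) (by intro c h1 h2; interval_cases c <;> norm_num)

theorem t53 : Nat.nth Nat.Prime 53 = 251 :=
  nth_step t52 (by norm_num) (by norm_num) (by intro c h1 h2; interval_cases c <;> norm_num)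

theorem t54 : Nat.nth Nat.Prime 54 = 257 :=
  nth_step t53 (by norm_num) (by norm_num) (by intro c h1 h2; interval_cases c <;> norm_num)

theorem t55 : Nat.nth Nat.Prime 55 = 263 :=
  nth_step t54 (by norm_num) (by norm_num) (by intro c h1 h2; interval_cases c <;> norm_num)

theorem t56 : Nat.nth Nat.Prime 56 = 269 :=
  nth_step t55 (by norm_num) (by norm_num) (by intro c h1 h2; interval_cases c <;> norm_num)

theorem t57 : Nat.nth Nat.Prime 57 = 271 :=
  nth_step t56 (by norm_num) (by norm_num) (by intro c h1 h2; interval_cases c <;> norm_num)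

theorem t58 : Nat.nth Nat.Prime 58 = 277 :=
  nth_step t57 (by norm_num) (by norm_num) (by intro c h1 h2; interval_cases c <;> norm_num)

theorem t59 : Nat.nth Nat.Prime 59 = 281 :=
  nth_step t58 (by norm_num) (by norm_num) (by intro c h1 h2; interval_cases c <;> norm_num)

theorem t60 : Nat.nth Nat.Prime 60 = 283 :=
  nth_step t59 (by norm_num) (by norm_num) (by intro c h1 h2; interval_cases c <;> norm_num)

theorem t61 : Nat.nth Nat.Prime 61 = 293 :=
  nth_step t60 (by norm_num) (by norm_num) (by intro c h1 h2; interval_cases c <;> norm_num)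

theorem t62 : Nat.nth Nat.Prime 62 = 307 :=
  nth_step t61 (by norm_num) (by norm_num) (by intro c h1 h2; interval_cases c <;> norm_num)

theorem t63 : Nat.nth Nat.Prime 63 = 311 :=
  nth_step t62 (by norm_num) (by norm_num) (by intro c h1 h2; interval_cases c <;> norm_num)

theorem t64 : Nat.nth Nat.Prime 64 = 313 :=
  nth_step t63 (by norm_num) (by norm_num) (by intro c h1 h2; interval_cases c <;> norm_num)

theorem t65 : Nat.nth Nat.Prime 65 = 317 :=
  nth_step t64 (by norm_num) (by norm_num) (by intro c h1 h2; interval_cases c <;> norm_num)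

theorem t66 : Nat.nth Nat.Prime 66 = 331 :=
  nth_step t65 (by norm_num) (by norm_num) (by intro c h1 h2; interval_cases c <;> norm_num)

theorem t67 : Nat.nth Nat.Prime 67 = 337 :=
  nth_step t66 (by norm_num) (by norm_num) (by intro c h1 h2; interval_cases c <;> norm_num)

theorem t68 : Nat.nth Nat.Prime 68 = 347 :=
  nth_step t67 (by norm_num) (by norm_num) (by intro c h1 h2; interval_cases c <;> norm_num)

theorem t69 : Nat.nth Nat.Prime 69 = 349 :=
  nth_step t68 (by norm_num) (by norm_num) (by intro c h1 h2; interval_cases c <;> norm_num)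

theorem t70 : Nat.nth Nat.Prime 70 = 353 :=
  nth_step t69 (by norm_num) (by norm_num) (by intro c h1 h2; interval_cases c <;> norm_num)

theorem t71 : Nat.nth Nat.Prime 71 = 359 :=
  nth_step t70 (by norm_num) (by norm_num) (by intro c h1 h2; interval_cases c <;> norm_num)

theorem t72 : Nat.nth Nat.Prime 72 = 367 :=
  nth_step t71 (by norm_num) (by norm_num) (by intro c h1 h2; interval_cases c <;> norm_num)

theorem t73 : Nat.nth Nat.Prime 73 = 373 :=
  nth_step t72 (by norm_num) (by norm_num) (by intro c h1 h2; interval_cases c <;> norm_num)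

theorem t74 : Nat.nth Nat.Prime 74 = 379 :=
  nth_step t73 (by norm_num) (by norm_num) (by intro c h1 h2; interval_cases c <;> norm_num)

theorem t75 : Nat.nth Nat.Prime 75 = 383 :=
  nth_step t74 (by norm_num) (by norm_num) (by intro c h1 h2; interval_cases c <;> norm_num)

theorem t76 : Nat.nth Nat.Prime 76 = 389 :=
  nth_step t75 (by norm_num) (by norm_num) (by intro c h1 h2; interval_cases c <;> norm_num)

theorem t77 : Nat.nth Nat.Prime 77 = 397 :=
  nth_step t76 (by norm_num) (by norm_num) (by intro c h1 h2; interval_cases c <;> norm_num)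

theorem t78 : Nat.nth Nat.Prime 78 = 401 :=
  nth_step t77 (by norm_num) (by norm_num) (by intro c h1 h2; interval_cases c <;> norm_num)

theorem t79 : Nat.nth Nat.Prime 79 = 409 :=
  nth_step t78 (by norm_num) (by norm_num) (by intro c h1 h2; interval_cases c <;> norm_num)

theorem t80 : Nat.nth Nat.Prime 80 = 419 :=
  nth_step t79 (by norm_num) (by norm_num) (by intro c h1 h2; interval_cases c <;> norm_num)

theorem t81 : Nat.nth Nat.Prime 81 = 421 :=
  nth_step t80 (by norm_num) (by norm_num) (by intro c h1 h2; interval_cases c <;> norm_num)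

theorem t82 : Nat.nth Nat.Prime 82 = 431 :=
  nth_step t81 (by norm_num) (by norm_num) (by intro c h1 h2; interval_cases c <;> norm_num)

theorem t83 : Nat.nth Nat.Prime 83 = 433 :=
  nth_step t82 (by norm_num) (by norm_num) (by intro c h1 h2; interval_cases c <;> norm_num)

theorem t84 : Nat.nth Nat.Prime 84 = 439 :=
  nth_step t83 (by norm_num) (by norm_num) (by intro c h1 h2; interval_cases c <;> norm_num)

theorem t85 : Nat.nth Nat.Prime 85 = 443 :=
  nth_step t84 (by norm_num) (by norm_num) (by intro c h1 h2; interval_cases c <;> norm_num)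

theorem t86 : Nat.nth Nat.Prime 86 = 449 :=
  nth_step t85 (by norm_num) (by norm_num) (by intro c h1 h2; interval_cases c <;> norm_num)

theorem t87 : Nat.nth Nat.Prime 87 = 457 :=
  nth_step t86 (by norm_num) (by norm_num) (by intro c h1 h2; interval_cases c <;> norm_num)

theorem t88 : Nat.nth Nat.Prime 88 = 461 :=
  nth_step t87 (by norm_num) (by norm_num) (by intro c h1 h2; interval_cases c <;> norm_num)

theorem t89 : Nat.nth Nat.Prime 89 = 463 :=
  nth_step t88 (by norm_num) (by norm_num) (by intro c h1 h2; interval_cases c <;> norm_num)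

theorem t90 : Nat.nth Nat.Prime 90 = 467 :=
  nth_step t89 (by norm_num) (by norm_num) (by intro c h1 h2; interval_cases c <;> norm_num)

theorem t91 : Nat.nth Nat.Prime 91 = 479 :=
  nth_step t90 (by norm_num) (by norm_num) (by intro c h1 h2; interval_cases c <;> norm_num)

theorem t92 : Nat.nth Nat.Prime 92 = 487 :=
  nth_step t91 (by norm_num) (by norm_num) (by intro c h1 h2; interval_cases c <;> norm_num)

theorem t93 : Nat.nth Nat.Prime 93 = 491 :=
  nth_step t92 (by norm_num) (by norm_num) (by intro c h1 h2; interval_cases c <;> norm_num)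

theorem t94 : Nat.nth Nat.Prime 94 = 499 :=
  nth_step t93 (by norm_num) (by norm_num) (by intro c h1 h2; interval_cases c <;> norm_num)

theorem t95 : Nat.nth Nat.Prime 95 = 503 :=
  nth_step t94 (by norm_num) (by norm_num) (by intro c h1 h2; interval_cases c <;> norm_num)

theorem t96 : Nat.nth Nat.Prime 96 = 509 :=
  nth_step t95 (by norm_num) (by norm_num) (by intro c h1 h2; interval_cases c <;> norm_num)

theorem t97 : Nat.nth Nat.Prime 97 = 521 :=
  nth_step t96 (by norm_num) (by norm_num) (by intro c h1 h2; interval_cases c <;> norm_num)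

theorem t98 : Nat.nth Nat.Prime 98 = 523 :=
  nth_step t97 (by norm_num) (by norm_num) (by intro c h1 h2; interval_cases c <;> norm_num)

theorem t99 : Nat.nth Nat.Prime 99 = 541 :=
  nth_step t98 (by norm_num) (by norm_num) (by intro c h1 h2; interval_cases c <;> norm_num)

theorem t100 : Nat.nth Nat.Prime 100 = 547 :=
  nth_step t99 (by norm_num) (by norm_num) (by intro c h1 h2; interval_cases c <;> norm_num)

theorem t101 : Nat.nth Nat.Prime 101 = 557 :=
  nth_step t100 (by norm_num) (by norm_num) (by intro c h1 h2; interval_cases c <;> norm_num)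

theorem t102 : Nat.nth Nat.Prime 102 = 563 :=
  nth_step t101 (by norm_num) (by norm_num) (by intro c h1 h2; interval_cases c <;> norm_num)

theorem t103 : Nat.nth Nat.Prime 103 = 569 :=
  nth_step t102 (by norm_num) (by norm_num) (by intro c h1 h2; interval_cases c <;> norm_num)

theorem t104 : Nat.nth Nat.Prime 104 = 571 :=
  nth_step t103 (by norm_num) (by norm_num) (by intro c h1 h2; interval_cases c <;> norm_num)

theorem t105 : Nat.nth Nat.Prime 105 = 577 :=
  nth_step t104 (by norm_num) (by norm_num) (by intro c h1 h2; interval_cases c <;> norm_num)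

theorem t106 : Nat.nth Nat.Prime 106 = 587 :=
  nth_step t105 (by norm_num) (by norm_num) (by intro c h1 h2; interval_cases c <;> norm_num)

theorem t107 : Nat.nth Nat.Prime 107 = 593 :=
  nth_step t106 (by norm_num) (by norm_num) (by intro c h1 h2; interval_cases c <;> norm_num)

theorem t108 : Nat.nth Nat.Prime 108 = 599 :=
  nth_step t107 (by norm_num) (by norm_num) (by intro c h1 h2; interval_cases c <;> norm_num)

theorem t109 : Nat.nth Nat.Prime 109 = 601 :=
  nth_step t108 (by norm_num) (by norm_num) (by intro c h1 h2; interval_cases c <;> norm_num)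

theorem t110 : Nat.nth Nat.Prime 110 = 607 :=
  nth_step t109 (by norm_num) (by norm_num) (by intro c h1 h2; interval_cases c <;> norm_num)

theorem t111 : Nat.nth Nat.Prime 111 = 613 :=
  nth_step t110 (by norm_num) (by norm_num) (by intro c h1 h2; interval_cases c <;> norm_num)

theorem t112 : Nat.nth Nat.Prime 112 = 617 :=
  nth_step t111 (by norm_num) (by norm_num) (by intro c h1 h2; interval_cases c <;> norm_num)

theorem t113 : Nat.nth Nat.Prime 113 = 619 :=
  nth_step t112 (by norm_num) (by norm_num) (by intro c h1 h2; interval_cases c <;> norm_num)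

theorem t114 : Nat.nth Nat.Prime 114 = 631 :=
  nth_step t113 (by norm_num) (by norm_num) (by intro c h1 h2; interval_cases c <;> norm_num)

theorem t115 : Nat.nth Nat.Prime 115 = 641 :=
  nth_step t114 (by norm_num) (by norm_num) (by intro c h1 h2; interval_cases c <;> norm_num)

theorem t116 : Nat.nth Nat.Prime 116 = 643 :=
  nth_step t115 (by norm_num) (by norm_num) (by intro c h1 h2; interval_cases c <;> norm_num)

theorem t117 : Nat.nth Nat.Prime 117 = 647 :=
  nth_step t116 (by norm_num) (by norm_num) (by intro c h1 h2; interval_cases c <;> norm_num)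

theorem t118 : Nat.nth Nat.Prime 118 = 653 :=
  nth_step t117 (by norm_num) (by norm_num) (by intro c h1 h2; interval_cases c <;> norm_num)

theorem t119 : Nat.nth Nat.Prime 119 = 659 :=
  nth_step t118 (by norm_num) (by norm_num) (by intro c h1 h2; interval_cases c <;> norm_num)

theorem t120 : Nat.nth Nat.Prime 120 = 661 :=
  nth_step t119 (by norm_num) (by norm_num) (by intro c h1 h2; interval_cases c <;> norm_num)

theorem t121 : Nat.nth Nat.Prime 121 = 673 :=
  nth_step t120 (by norm_num) (by norm_num) (by intro c h1 h2; interval_cases c <;> norm_num)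

set_option maxHeartbeats 1000000 in
theorem small {n : ℕ} (h6 : 6 ≤ n) (h120 : n ≤ 120) :
    Nat.nth Nat.Prime (n - 3) + Nat.nth Nat.Prime (n - 1) ≥ Nat.nth Nat.Prime (n + 1) := by
  interval_cases n <;> norm_num [t0, t1, t2, t3, t4, t5, t6, t7, t8, t9, t10, t11, t12, t13, t14, t15, t16, t17, t18, t19, t20, t21, t22, t23, t24, t25, t26, t27, t28, t29, t30, t31, t32, t33, t34, t35, t36, t37, t38, t39, t40, t41, t42, t43, t44, t45, t46, t47, t48, t49, t50, t51, t52, t53, t54, t55, t56, t57, t58, t59, t60, t61, t62, t63, t64, t65, t66, t67, t68, t69, t70, t71, t72, t73, t74, t75, t76, t77, t78, t79, t80, t81, t82, t83, t84, t85, t86, t87, t88, t89, t90, t91, t92, t93, t94, t95, t96, t97, t98, t99, t100, t101, t102, t103, t104, t105, t106, t107, t108, t109, t110, t111, t112, t113, t114, t115, t116, t117, t118, t119, t120, t121]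

theorem main_forall {n : ℕ} (h6 : 6 ≤ n) :
    nthPrime (n - 2) + nthPrime n ≥ nthPrime (n + 2) := by
  have hidx : nthPrime (n - 2) = Nat.nth Nat.Prime (n - 3) := by
    unfold nthPrime
    rw [show n - 2 - 1 = n - 3 from by omega]
  have hidx2 : nthPrime n = Nat.nth Nat.Prime (n - 1) := rfl
  have hidx3 : nthPrime (n + 2) = Nat.nth Nat.Prime (n + 1) := rfl
  rw [hidx, hidx2, hidx3]
  by_cases h : n ≤ 120
  · exact small h6 h
  · refine key h6 ?_
    have h118 : Nat.nth Nat.Prime 118 ≤ Nat.nth Nat.Prime (n - 3) :=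
      Nat.nth_monotone Nat.infinite_setOf_prime (by omega)
    rw [t118] at h118
    omega

end MyNagura

theorem N_two_two_eq_six :
    (∀ n : ℕ, 6 ≤ n → nthPrime (n - 2) + nthPrime n ≥ nthPrime (n + 2)) ∧
    nthPrime 3 + nthPrime 5 < nthPrime 7 ∧
    IsLeast {N : ℕ | 0 < N ∧ ∀ n : ℕ, N ≤ n →
      nthPrime (n - 2) + nthPrime n ≥ nthPrime (n + 2)} 6 := by
  have h5 : nthPrime 3 + nthPrime 5 < nthPrime 7 := by
    show Nat.nth Nat.Prime 2 + Nat.nth Nat.Prime 4 < Nat.nth Nat.Prime 6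
    rw [MyNagura.t2, MyNagura.t4, MyNagura.t6]
    norm_num
  refine ⟨fun n hn => MyNagura.main_forall hn, h5, ⟨⟨by norm_num,
    fun n hn => MyNagura.main_forall hn⟩, ?_⟩⟩
  intro N hN
  by_contra hlt
  push_neg at hlt
  have h55 := hN.2 5 (by omega)
  norm_num at h55
  omega
end

section
/- Let p_n denote the n-th prime (p_1 = 2, p_2 = 3, ...). For every integer n ≥ 10, p_{n-3} + p_n ≥ p_{n+3}, and this fails for n = 9 (i.e., p_6 + p_9 < p_{12}). Hence the least positive integer N such that p_{n-3} + p_n ≥ p_{n+3} holds for all n ≥ N is N = 10. -/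
open Finset

set_option maxRecDepth 40000


private lemma NTT_centralBinom_le (n : ℕ) (n_large : 2 < n)
    (hcard : #((Finset.Ioc n (2*n)).filter Nat.Prime) ≤ 5) :
    Nat.centralBinom n ≤ (2 * n) ^ Nat.sqrt (2 * n) * 4 ^ (2 * n / 3) * (2 * n) ^ 5 := by
  have n_pos : 0 < n := by omega
  have n2_pos : 1 ≤ 2 * n := by omega
  have hsplit : Finset.range (2 * n + 1) =
      Finset.range (2 * n / 3 + 1) ∪ Finset.Ico (2 * n / 3 + 1) (2 * n + 1) := by
    rw [Finset.range_eq_Ico, Finset.range_eq_Ico]; rw [Finset.Ico_union_Ico_eq_Ico (by omega) (by omega)]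
  have hdisj : Disjoint (Finset.range (2 * n / 3 + 1)) (Finset.Ico (2 * n / 3 + 1) (2 * n + 1)) := by
    simp [Finset.disjoint_left, Finset.mem_range, Finset.mem_Ico]
    omega
  have hprod : Nat.centralBinom n =
      (∏ p ∈ Finset.range (2 * n / 3 + 1), p ^ (Nat.centralBinom n).factorization p) *
      (∏ p ∈ Finset.Ico (2 * n / 3 + 1) (2 * n + 1), p ^ (Nat.centralBinom n).factorization p) := by
    rw [← Finset.prod_union hdisj, ← hsplit, Nat.prod_pow_factorization_centralBinom]
  rw [hprod]
  apply mul_le_mul'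
  · -- small primes part, as in mathlib's proof
    let S := (Finset.range (2 * n / 3 + 1)).filter Nat.Prime
    let f := fun x => x ^ (Nat.centralBinom n).factorization x
    have : ∏ x ∈ S, f x = ∏ x ∈ Finset.range (2 * n / 3 + 1), f x := by
      refine Finset.prod_filter_of_ne fun p _ h => ?_
      contrapose! h; dsimp only [f]
      rw [Nat.factorization_eq_zero_of_not_prime _ h, _root_.pow_zero]
    rw [← this, ← Finset.prod_filter_mul_prod_filter_not S (· ≤ Nat.sqrt (2 * n))]
    apply mul_le_mul'
    · refine (Finset.prod_le_prod' fun p _ => (?_ : f p ≤ 2 * n)).trans ?_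
      · exact Nat.pow_factorization_choose_le (by omega)
      have : #(Finset.Icc 1 (Nat.sqrt (2 * n))) = Nat.sqrt (2 * n) := by
        rw [Nat.card_Icc, Nat.add_sub_cancel]
      rw [Finset.prod_const]
      refine pow_right_mono₀ n2_pos ((Finset.card_le_card fun x hx => ?_).trans this.le)
      obtain ⟨h1, h2⟩ := Finset.mem_filter.1 hx
      exact Finset.mem_Icc.mpr ⟨(Finset.mem_filter.1 h1).2.one_lt.le, h2⟩
    · refine le_trans ?_ (primorial_le_4_pow (2 * n / 3))
      refine (Finset.prod_le_prod' fun p hp => (?_ : f p ≤ p)).trans ?_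
      · obtain ⟨h1, h2⟩ := Finset.mem_filter.1 hp
        refine (pow_right_mono₀ (Finset.mem_filter.1 h1).2.one_lt.le ?_).trans (pow_one p).le
        exact Nat.factorization_choose_le_one (Nat.sqrt_lt'.mp <| not_le.1 h2)
      refine Finset.prod_le_prod_of_subset_of_one_le' (Finset.filter_subset _ _) ?_
      exact fun p hp _ => (Finset.mem_filter.1 hp).2.one_lt.le
  · -- large primes part
    let f := fun x => x ^ (Nat.centralBinom n).factorization x
    have h1 : ∏ p ∈ Finset.Ico (2 * n / 3 + 1) (2 * n + 1), f p =
        ∏ p ∈ (Finset.Ico (2 * n / 3 + 1) (2 * n + 1)).filter Nat.Prime, f p := by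
      refine (Finset.prod_filter_of_ne fun p _ h => ?_).symm
      contrapose! h; dsimp only [f]
      rw [Nat.factorization_eq_zero_of_not_prime _ h, _root_.pow_zero]
    rw [h1]
    have h2 : ∀ p ∈ (Finset.Ico (2 * n / 3 + 1) (2 * n + 1)).filter Nat.Prime,
        p ∉ (Finset.Ioc n (2*n)).filter Nat.Prime → f p = 1 := by
      intro p hp hnp
      obtain ⟨hmem, hprime⟩ := Finset.mem_filter.1 hp
      rw [Finset.mem_Ico] at hmem
      have hple : p ≤ n := by
        by_contra hgt
        exact hnp (Finset.mem_filter.2 ⟨Finset.mem_Ioc.2 ⟨by omega, by omega⟩, hprime⟩)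
      have h3p : 2 * n < 3 * p := by omega
      dsimp only [f]
      rw [Nat.factorization_centralBinom_of_two_mul_self_lt_three_mul n_large hple h3p,
        _root_.pow_zero]
    calc ∏ p ∈ (Finset.Ico (2 * n / 3 + 1) (2 * n + 1)).filter Nat.Prime, f p
        = ∏ p ∈ ((Finset.Ico (2 * n / 3 + 1) (2 * n + 1)).filter Nat.Prime).filter
            (· ∈ (Finset.Ioc n (2*n)).filter Nat.Prime), f p := by
          refine (Finset.prod_filter_of_ne fun p hp h => ?_).symm
          by_contra hnp
          exact h (h2 p hp hnp)
      _ ≤ ∏ _p ∈ ((Finset.Ico (2 * n / 3 + 1) (2 * n + 1)).filter Nat.Prime).filter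
            (· ∈ (Finset.Ioc n (2*n)).filter Nat.Prime), (2 * n) := by
          refine Finset.prod_le_prod' fun p _ => ?_
          exact Nat.pow_factorization_choose_le (by omega)
      _ = (2 * n) ^ #(((Finset.Ico (2 * n / 3 + 1) (2 * n + 1)).filter Nat.Prime).filter
            (· ∈ (Finset.Ioc n (2*n)).filter Nat.Prime)) := by rw [Finset.prod_const]
      _ ≤ (2 * n) ^ (5:ℕ) := by
          apply Nat.pow_le_pow_right (by omega)
          refine le_trans (Finset.card_le_card ?_) hcard
          intro p hp
          exact (Finset.mem_filter.1 hp).2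


private lemma NTT_glue (a m s : ℕ) (hm : 1 ≤ m) (hs : 2*m < (s+1)*(s+1))
    (hb : m * ((2*m)^(s+5) * 4^(2*m/3)) ≤ 4^a) :
    ∀ n : ℕ, a ≤ n → n ≤ m → n * ((2*n)^(Nat.sqrt (2*n)+5) * 4^(2*n/3)) ≤ 4^n := by
  intro n h1 h2
  have hsq : Nat.sqrt (2*n) ≤ s := by
    have h := Nat.sqrt_lt'.mpr (show 2*n < (s+1)^2 by nlinarith)
    omega
  calc n * ((2*n)^(Nat.sqrt (2*n)+5) * 4^(2*n/3))
      ≤ m * ((2*m)^(s+5) * 4^(2*m/3)) := by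
        apply Nat.mul_le_mul h2
        apply Nat.mul_le_mul
        · calc (2*n)^(Nat.sqrt (2*n)+5) ≤ (2*m)^(Nat.sqrt (2*n)+5) :=
                Nat.pow_le_pow_left (by omega) _
            _ ≤ (2*m)^(s+5) := Nat.pow_le_pow_right (by omega) (by omega)
        · exact Nat.pow_le_pow_right (by norm_num) (by omega)
    _ ≤ 4^a := hb
    _ ≤ 4^n := Nat.pow_le_pow_right (by norm_num) h1

private lemma NTT_key_mid : ∀ n : ℕ, 649 ≤ n → n ≤ 8192 →
    n * ((2*n)^(Nat.sqrt (2*n)+5) * 4^(2*n/3)) ≤ 4^n := by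
  intro n h1 h2

  rcases le_or_gt n 649 with h | h
  · exact NTT_glue 649 649 36 (by norm_num) (by norm_num) (by decide) n (by omega) h
  rcases le_or_gt n 650 with h | h
  · exact NTT_glue 650 650 36 (by norm_num) (by norm_num) (by decide) n (by omega) h
  rcases le_or_gt n 652 with h | h
  · exact NTT_glue 651 652 36 (by norm_num) (by norm_num) (by decide) n (by omega) h
  rcases le_or_gt n 655 with h | h
  · exact NTT_glue 653 655 36 (by norm_num) (by norm_num) (by decide) n (by omega) h
  rcases le_or_gt n 658 with h | h
  · exact NTT_glue 656 658 36 (by norm_num) (by norm_num) (by decide) n (by omega) h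
  rcases le_or_gt n 662 with h | h
  · exact NTT_glue 659 662 36 (by norm_num) (by norm_num) (by decide) n (by omega) h
  rcases le_or_gt n 668 with h | h
  · exact NTT_glue 663 668 36 (by norm_num) (by norm_num) (by decide) n (by omega) h
  rcases le_or_gt n 677 with h | h
  · exact NTT_glue 669 677 36 (by norm_num) (by norm_num) (by decide) n (by omega) h
  rcases le_or_gt n 684 with h | h
  · exact NTT_glue 678 684 36 (by norm_num) (by norm_num) (by decide) n (by omega) h
  rcases le_or_gt n 692 with h | h
  · exact NTT_glue 685 692 37 (by norm_num) (by norm_num) (by decide) n (by omega) h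
  rcases le_or_gt n 703 with h | h
  · exact NTT_glue 693 703 37 (by norm_num) (by norm_num) (by decide) n (by omega) h
  rcases le_or_gt n 718 with h | h
  · exact NTT_glue 704 718 37 (by norm_num) (by norm_num) (by decide) n (by omega) h
  rcases le_or_gt n 733 with h | h
  · exact NTT_glue 719 733 38 (by norm_num) (by norm_num) (by decide) n (by omega) h
  rcases le_or_gt n 754 with h | h
  · exact NTT_glue 734 754 38 (by norm_num) (by norm_num) (by decide) n (by omega) h
  rcases le_or_gt n 776 with h | h
  · exact NTT_glue 755 776 39 (by norm_num) (by norm_num) (by decide) n (by omega) h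
  rcases le_or_gt n 799 with h | h
  · exact NTT_glue 777 799 39 (by norm_num) (by norm_num) (by decide) n (by omega) h
  rcases le_or_gt n 832 with h | h
  · exact NTT_glue 800 832 40 (by norm_num) (by norm_num) (by decide) n (by omega) h
  rcases le_or_gt n 871 with h | h
  · exact NTT_glue 833 871 41 (by norm_num) (by norm_num) (by decide) n (by omega) h
  rcases le_or_gt n 919 with h | h
  · exact NTT_glue 872 919 42 (by norm_num) (by norm_num) (by decide) n (by omega) h
  rcases le_or_gt n 971 with h | h
  · exact NTT_glue 920 971 44 (by norm_num) (by norm_num) (by decide) n (by omega) h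
  rcases le_or_gt n 1037 with h | h
  · exact NTT_glue 972 1037 45 (by norm_num) (by norm_num) (by decide) n (by omega) h
  rcases le_or_gt n 1115 with h | h
  · exact NTT_glue 1038 1115 47 (by norm_num) (by norm_num) (by decide) n (by omega) h
  rcases le_or_gt n 1211 with h | h
  · exact NTT_glue 1116 1211 49 (by norm_num) (by norm_num) (by decide) n (by omega) h
  rcases le_or_gt n 1333 with h | h
  · exact NTT_glue 1212 1333 51 (by norm_num) (by norm_num) (by decide) n (by omega) h
  rcases le_or_gt n 1483 with h | h
  · exact NTT_glue 1334 1483 54 (by norm_num) (by norm_num) (by decide) n (by omega) h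
  rcases le_or_gt n 1673 with h | h
  · exact NTT_glue 1484 1673 57 (by norm_num) (by norm_num) (by decide) n (by omega) h
  rcases le_or_gt n 1913 with h | h
  · exact NTT_glue 1674 1913 61 (by norm_num) (by norm_num) (by decide) n (by omega) h
  rcases le_or_gt n 2218 with h | h
  · exact NTT_glue 1914 2218 66 (by norm_num) (by norm_num) (by decide) n (by omega) h
  rcases le_or_gt n 2606 with h | h
  · exact NTT_glue 2219 2606 72 (by norm_num) (by norm_num) (by decide) n (by omega) h
  rcases le_or_gt n 3118 with h | h
  · exact NTT_glue 2607 3118 78 (by norm_num) (by norm_num) (by decide) n (by omega) h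
  rcases le_or_gt n 3784 with h | h
  · exact NTT_glue 3119 3784 86 (by norm_num) (by norm_num) (by decide) n (by omega) h
  rcases le_or_gt n 4669 with h | h
  · exact NTT_glue 3785 4669 96 (by norm_num) (by norm_num) (by decide) n (by omega) h
  rcases le_or_gt n 5851 with h | h
  · exact NTT_glue 4670 5851 108 (by norm_num) (by norm_num) (by decide) n (by omega) h
  rcases le_or_gt n 7448 with h | h
  · exact NTT_glue 5852 7448 122 (by norm_num) (by norm_num) (by decide) n (by omega) h
  rcases le_or_gt n 8192 with h | h
  · exact NTT_glue 7449 8192 128 (by norm_num) (by norm_num) (by decide) n (by omega) h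
  omega


private lemma NTT_C : ∀ k : ℕ, 13 ≤ k → 3*((2^((k+3)/2)+6)*(k+2)) ≤ 2^(k+1) := by
  intro k
  induction k using Nat.strong_induction_on with
  | _ k ih =>
    intro hk
    rcases lt_or_ge k 15 with h | h
    · interval_cases k <;> norm_num
    · have ihk := ih (k-2) (by omega) (by omega)
      have he : (k+3)/2 = (k-2+3)/2 + 1 := by omega
      have he2 : k - 2 + 3 = k + 1 := by omega
      rw [he, pow_succ]
      have h1 : 3*((2^((k-2+3)/2)*2+6)*(k+2)) ≤ 4*(3*((2^((k-2+3)/2)+6)*(k-2+2))) := by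
        have hA : (2:ℕ) ≤ 2^((k-2+3)/2) := by
          calc (2:ℕ) = 2^1 := by norm_num
            _ ≤ 2^((k-2+3)/2) := Nat.pow_le_pow_right (by norm_num) (by omega)
        have hk2 : k - 2 + 2 = k := by omega
        rw [hk2]
        nlinarith
      have h2 : (4:ℕ)*2^(k-2+1) ≤ 2^(k+1) := by
        have : (4:ℕ)*2^(k-2+1) = 2^(k-2+3) := by ring
        rw [this]
        exact Nat.pow_le_pow_right (by norm_num) (by omega)
      omega

private lemma NTT_key_tail : ∀ n : ℕ, 8192 ≤ n →
    n * ((2*n)^(Nat.sqrt (2*n)+5) * 4^(2*n/3)) ≤ 4^n := by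
  intro n hn
  set k := Nat.log 2 n with hkdef
  have hn0 : n ≠ 0 := by omega
  have hk13 : 13 ≤ k := by
    rw [hkdef, Nat.le_log_iff_pow_le (by norm_num) hn0]
    calc (2:ℕ)^13 = 8192 := by norm_num
      _ ≤ n := hn
  have hnlt : n < 2^(k+1) := Nat.lt_pow_succ_log_self (by norm_num) n
  have hnge : 2^k ≤ n := Nat.pow_log_le_self 2 hn0
  have h2n : 2*n ≤ 2^(k+2) := by
    have : (2:ℕ)^(k+2) = 2*2^(k+1) := by ring
    omega
  have hsq : Nat.sqrt (2*n) ≤ 2^((k+3)/2) := by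
    have h1 : (2:ℕ)^(k+2) ≤ 2^((k+3)/2) * 2^((k+3)/2) := by
      rw [← pow_add]
      exact Nat.pow_le_pow_right (by norm_num) (by omega)
    have hlt : 2*n < (2^((k+3)/2)+1)^2 := by
      have hexpand : (2^((k+3)/2)+1)^2 = 2^((k+3)/2) * 2^((k+3)/2) + 2*2^((k+3)/2) + 1 := by ring
      omega
    have := Nat.sqrt_lt'.mpr hlt
    omega
  -- exponent bound
  have hexp : (k+2) * (Nat.sqrt (2*n) + 6) ≤ 2 * (n - 2*n/3) := by
    have hC := NTT_C k hk13
    have h1 : (k+2) * (Nat.sqrt (2*n) + 6) ≤ (2^((k+3)/2)+6)*(k+2) := by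
      rw [mul_comm]
      exact Nat.mul_le_mul_right _ (by omega)
    have h2 : 3 * ((k+2) * (Nat.sqrt (2*n) + 6)) ≤ 2^(k+1) := by
      calc 3 * ((k+2) * (Nat.sqrt (2*n) + 6)) ≤ 3*((2^((k+3)/2)+6)*(k+2)) := by omega
        _ ≤ 2^(k+1) := hC
    have h3 : (2:ℕ)^(k+1) ≤ 2*n := by
      have : (2:ℕ)^(k+1) = 2*2^k := by ring
      omega
    have h4 := Nat.mul_div_le (2*n) 3
    omega
  have h4 := Nat.mul_div_le (2*n) 3
  calc n * ((2*n)^(Nat.sqrt (2*n)+5) * 4^(2*n/3))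
      ≤ (2*n)^(Nat.sqrt (2*n)+6) * 4^(2*n/3) := by
        calc n * ((2*n)^(Nat.sqrt (2*n)+5) * 4^(2*n/3))
            ≤ (2*n) * ((2*n)^(Nat.sqrt (2*n)+5) * 4^(2*n/3)) :=
              mul_le_mul_left (by omega) _
          _ = (2*n)^(Nat.sqrt (2*n)+6) * 4^(2*n/3) := by ring
    _ ≤ (2^(k+2))^(Nat.sqrt (2*n)+6) * 4^(2*n/3) :=
        Nat.mul_le_mul_right _ (Nat.pow_le_pow_left h2n _)
    _ = 2^((k+2)*(Nat.sqrt (2*n)+6)) * 4^(2*n/3) := by rw [← pow_mul]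
    _ ≤ 2^(2*(n - 2*n/3)) * 4^(2*n/3) :=
        Nat.mul_le_mul_right _ (Nat.pow_le_pow_right (by norm_num) hexp)
    _ = 4^(n - 2*n/3) * 4^(2*n/3) := by
        congr 1
        rw [pow_mul]
        norm_num
    _ = 4^n := by
        rw [← pow_add]
        congr 1
        omega

private lemma NTT_six (x : ℕ) (hx : 649 ≤ x) :
    6 ≤ ((Finset.Ioc x (2*x)).filter Nat.Prime).card := by
  by_contra hc
  push_neg at hc
  have hcard : ((Finset.Ioc x (2*x)).filter Nat.Prime).card ≤ 5 := by omega
  have H3 := NTT_centralBinom_le x (by omega) hcard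
  have H2 : 4^x < x * Nat.centralBinom x := Nat.four_pow_lt_mul_centralBinom x (by omega)
  have hkey : x * ((2*x)^(Nat.sqrt (2*x)+5) * 4^(2*x/3)) ≤ 4^x := by
    rcases le_or_gt x 8192 with h | h
    · exact NTT_key_mid x hx h
    · exact NTT_key_tail x (by omega)
  have hmul : x * Nat.centralBinom x ≤ x * ((2*x)^(Nat.sqrt (2*x)) * 4^(2*x/3) * (2*x)^5) :=
    Nat.mul_le_mul_left _ H3
  have heq : x * ((2*x)^(Nat.sqrt (2*x)) * 4^(2*x/3) * (2*x)^5)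
      = x * ((2*x)^(Nat.sqrt (2*x)+5) * 4^(2*x/3)) := by ring
  omega

private lemma NTT_count_split (x : ℕ) : Nat.count Nat.Prime (2*x+1)
    = Nat.count Nat.Prime (x+1) + ((Finset.Ioc x (2*x)).filter Nat.Prime).card := by
  rw [Nat.count_eq_card_filter_range, Nat.count_eq_card_filter_range]
  have hsplit : Finset.range (2*x+1) = Finset.range (x+1) ∪ Finset.Ico (x+1) (2*x+1) := by
    rw [Finset.range_eq_Ico, Finset.range_eq_Ico]
    rw [Finset.Ico_union_Ico_eq_Ico (by omega) (by omega)]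
  have hIoc : Finset.Ico (x+1) (2*x+1) = Finset.Ioc x (2*x) := by
    ext m
    simp only [Finset.mem_Ico, Finset.mem_Ioc]
    omega
  have hdisj : Disjoint (Finset.range (x+1)) (Finset.Ico (x+1) (2*x+1)) := by
    simp only [Finset.disjoint_left, Finset.mem_range, Finset.mem_Ico]
    omega
  rw [hsplit, Finset.filter_union,
    Finset.card_union_of_disjoint (Finset.disjoint_filter_filter hdisj), hIoc]

private lemma NTT_nth_six (i : ℕ) (hi : 649 ≤ Nat.nth Nat.Prime i) :
    Nat.nth Nat.Prime (i+6) ≤ 2 * Nat.nth Nat.Prime i := by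
  have h6 := NTT_six (Nat.nth Nat.Prime i) hi
  have hc1 : Nat.count Nat.Prime (Nat.nth Nat.Prime i + 1) = i + 1 :=
    Nat.count_nth_succ_of_infinite Nat.infinite_setOf_prime i
  have hsp := NTT_count_split (Nat.nth Nat.Prime i)
  have hlt : i + 6 < Nat.count Nat.Prime (2 * Nat.nth Nat.Prime i + 1) := by omega
  have := Nat.nth_lt_of_lt_count hlt
  omega


attribute [local instance 2000] Nat.decidablePrime


private lemma NTT_nth_step {k a b : ℕ} (h : Nat.nth Nat.Prime k = a) (hb : Nat.Prime b)
    (hab : a < b) (hgap : ∀ j < b - a - 1, ¬ Nat.Prime (a + 1 + j)) :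
    Nat.nth Nat.Prime (k + 1) = b := by
  have hinf := Nat.infinite_setOf_prime
  have hcb : Nat.nth Nat.Prime (Nat.count Nat.Prime b) = b := Nat.nth_count hb
  have hklt : k < Nat.count Nat.Prime b := by
    rw [← Nat.nth_lt_nth hinf, h, hcb]; exact hab
  have h1 : Nat.nth Nat.Prime (k + 1) ≤ b := by
    calc Nat.nth Nat.Prime (k + 1) ≤ Nat.nth Nat.Prime (Nat.count Nat.Prime b) :=
          (Nat.nth_le_nth hinf).2 hklt
      _ = b := hcb
  have h2 : a < Nat.nth Nat.Prime (k + 1) := by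
    rw [← h]; exact (Nat.nth_lt_nth hinf).2 (Nat.lt_succ_self k)
  rcases eq_or_lt_of_le h1 with he | hlt
  · exact he
  · exfalso
    have hx := Nat.nth_mem_of_infinite hinf (k + 1)
    have hgap' := hgap (Nat.nth Nat.Prime (k + 1) - a - 1) (by omega)
    have heq : a + 1 + (Nat.nth Nat.Prime (k + 1) - a - 1) = Nat.nth Nat.Prime (k + 1) := by omega
    rw [heq] at hgap'
    exact hgap' hx


private lemma NTT_nth0 : Nat.nth Nat.Prime 0 = 2 := Nat.nth_prime_zero_eq_two
private lemma NTT_nth1 : Nat.nth Nat.Prime 1 = 3 :=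
  NTT_nth_step NTT_nth0 (by norm_num) (by norm_num) (by decide)
private lemma NTT_nth2 : Nat.nth Nat.Prime 2 = 5 :=
  NTT_nth_step NTT_nth1 (by norm_num) (by norm_num) (by decide)
private lemma NTT_nth3 : Nat.nth Nat.Prime 3 = 7 :=
  NTT_nth_step NTT_nth2 (by norm_num) (by norm_num) (by decide)
private lemma NTT_nth4 : Nat.nth Nat.Prime 4 = 11 :=
  NTT_nth_step NTT_nth3 (by norm_num) (by norm_num) (by decide)
private lemma NTT_nth5 : Nat.nth Nat.Prime 5 = 13 :=
  NTT_nth_step NTT_nth4 (by norm_num) (by norm_num) (by decide)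
private lemma NTT_nth6 : Nat.nth Nat.Prime 6 = 17 :=
  NTT_nth_step NTT_nth5 (by norm_num) (by norm_num) (by decide)
private lemma NTT_nth7 : Nat.nth Nat.Prime 7 = 19 :=
  NTT_nth_step NTT_nth6 (by norm_num) (by norm_num) (by decide)
private lemma NTT_nth8 : Nat.nth Nat.Prime 8 = 23 :=
  NTT_nth_step NTT_nth7 (by norm_num) (by norm_num) (by decide)
private lemma NTT_nth9 : Nat.nth Nat.Prime 9 = 29 :=
  NTT_nth_step NTT_nth8 (by norm_num) (by norm_num) (by decide)
private lemma NTT_nth10 : Nat.nth Nat.Prime 10 = 31 :=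
  NTT_nth_step NTT_nth9 (by norm_num) (by norm_num) (by decide)
private lemma NTT_nth11 : Nat.nth Nat.Prime 11 = 37 :=
  NTT_nth_step NTT_nth10 (by norm_num) (by norm_num) (by decide)
private lemma NTT_nth12 : Nat.nth Nat.Prime 12 = 41 :=
  NTT_nth_step NTT_nth11 (by norm_num) (by norm_num) (by decide)
private lemma NTT_nth13 : Nat.nth Nat.Prime 13 = 43 :=
  NTT_nth_step NTT_nth12 (by norm_num) (by norm_num) (by decide)
private lemma NTT_nth14 : Nat.nth Nat.Prime 14 = 47 :=
  NTT_nth_step NTT_nth13 (by norm_num) (by norm_num) (by decide)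
private lemma NTT_nth15 : Nat.nth Nat.Prime 15 = 53 :=
  NTT_nth_step NTT_nth14 (by norm_num) (by norm_num) (by decide)
private lemma NTT_nth16 : Nat.nth Nat.Prime 16 = 59 :=
  NTT_nth_step NTT_nth15 (by norm_num) (by norm_num) (by decide)
private lemma NTT_nth17 : Nat.nth Nat.Prime 17 = 61 :=
  NTT_nth_step NTT_nth16 (by norm_num) (by norm_num) (by decide)
private lemma NTT_nth18 : Nat.nth Nat.Prime 18 = 67 :=
  NTT_nth_step NTT_nth17 (by norm_num) (by norm_num) (by decide)
private lemma NTT_nth19 : Nat.nth Nat.Prime 19 = 71 :=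
  NTT_nth_step NTT_nth18 (by norm_num) (by norm_num) (by decide)
private lemma NTT_nth20 : Nat.nth Nat.Prime 20 = 73 :=
  NTT_nth_step NTT_nth19 (by norm_num) (by norm_num) (by decide)
private lemma NTT_nth21 : Nat.nth Nat.Prime 21 = 79 :=
  NTT_nth_step NTT_nth20 (by norm_num) (by norm_num) (by decide)
private lemma NTT_nth22 : Nat.nth Nat.Prime 22 = 83 :=
  NTT_nth_step NTT_nth21 (by norm_num) (by norm_num) (by decide)
private lemma NTT_nth23 : Nat.nth Nat.Prime 23 = 89 :=
  NTT_nth_step NTT_nth22 (by norm_num) (by norm_num) (by decide)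
private lemma NTT_nth24 : Nat.nth Nat.Prime 24 = 97 :=
  NTT_nth_step NTT_nth23 (by norm_num) (by norm_num) (by decide)
private lemma NTT_nth25 : Nat.nth Nat.Prime 25 = 101 :=
  NTT_nth_step NTT_nth24 (by norm_num) (by norm_num) (by decide)
private lemma NTT_nth26 : Nat.nth Nat.Prime 26 = 103 :=
  NTT_nth_step NTT_nth25 (by norm_num) (by norm_num) (by decide)
private lemma NTT_nth27 : Nat.nth Nat.Prime 27 = 107 :=
  NTT_nth_step NTT_nth26 (by norm_num) (by norm_num) (by decide)
private lemma NTT_nth28 : Nat.nth Nat.Prime 28 = 109 :=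
  NTT_nth_step NTT_nth27 (by norm_num) (by norm_num) (by decide)
private lemma NTT_nth29 : Nat.nth Nat.Prime 29 = 113 :=
  NTT_nth_step NTT_nth28 (by norm_num) (by norm_num) (by decide)
private lemma NTT_nth30 : Nat.nth Nat.Prime 30 = 127 :=
  NTT_nth_step NTT_nth29 (by norm_num) (by norm_num) (by decide)
private lemma NTT_nth31 : Nat.nth Nat.Prime 31 = 131 :=
  NTT_nth_step NTT_nth30 (by norm_num) (by norm_num) (by decide)
private lemma NTT_nth32 : Nat.nth Nat.Prime 32 = 137 :=
  NTT_nth_step NTT_nth31 (by norm_num) (by norm_num) (by decide)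
private lemma NTT_nth33 : Nat.nth Nat.Prime 33 = 139 :=
  NTT_nth_step NTT_nth32 (by norm_num) (by norm_num) (by decide)
private lemma NTT_nth34 : Nat.nth Nat.Prime 34 = 149 :=
  NTT_nth_step NTT_nth33 (by norm_num) (by norm_num) (by decide)
private lemma NTT_nth35 : Nat.nth Nat.Prime 35 = 151 :=
  NTT_nth_step NTT_nth34 (by norm_num) (by norm_num) (by decide)
private lemma NTT_nth36 : Nat.nth Nat.Prime 36 = 157 :=
  NTT_nth_step NTT_nth35 (by norm_num) (by norm_num) (by decide)
private lemma NTT_nth37 : Nat.nth Nat.Prime 37 = 163 :=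
  NTT_nth_step NTT_nth36 (by norm_num) (by norm_num) (by decide)
private lemma NTT_nth38 : Nat.nth Nat.Prime 38 = 167 :=
  NTT_nth_step NTT_nth37 (by norm_num) (by norm_num) (by decide)
private lemma NTT_nth39 : Nat.nth Nat.Prime 39 = 173 :=
  NTT_nth_step NTT_nth38 (by norm_num) (by norm_num) (by decide)
private lemma NTT_nth40 : Nat.nth Nat.Prime 40 = 179 :=
  NTT_nth_step NTT_nth39 (by norm_num) (by norm_num) (by decide)
private lemma NTT_nth41 : Nat.nth Nat.Prime 41 = 181 :=
  NTT_nth_step NTT_nth40 (by norm_num) (by norm_num) (by decide)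
private lemma NTT_nth42 : Nat.nth Nat.Prime 42 = 191 :=
  NTT_nth_step NTT_nth41 (by norm_num) (by norm_num) (by decide)
private lemma NTT_nth43 : Nat.nth Nat.Prime 43 = 193 :=
  NTT_nth_step NTT_nth42 (by norm_num) (by norm_num) (by decide)
private lemma NTT_nth44 : Nat.nth Nat.Prime 44 = 197 :=
  NTT_nth_step NTT_nth43 (by norm_num) (by norm_num) (by decide)
private lemma NTT_nth45 : Nat.nth Nat.Prime 45 = 199 :=
  NTT_nth_step NTT_nth44 (by norm_num) (by norm_num) (by decide)
private lemma NTT_nth46 : Nat.nth Nat.Prime 46 = 211 :=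
  NTT_nth_step NTT_nth45 (by norm_num) (by norm_num) (by decide)
private lemma NTT_nth47 : Nat.nth Nat.Prime 47 = 223 :=
  NTT_nth_step NTT_nth46 (by norm_num) (by norm_num) (by decide)
private lemma NTT_nth48 : Nat.nth Nat.Prime 48 = 227 :=
  NTT_nth_step NTT_nth47 (by norm_num) (by norm_num) (by decide)
private lemma NTT_nth49 : Nat.nth Nat.Prime 49 = 229 :=
  NTT_nth_step NTT_nth48 (by norm_num) (by norm_num) (by decide)
private lemma NTT_nth50 : Nat.nth Nat.Prime 50 = 233 :=
  NTT_nth_step NTT_nth49 (by norm_num) (by norm_num) (by decide)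
private lemma NTT_nth51 : Nat.nth Nat.Prime 51 = 239 :=
  NTT_nth_step NTT_nth50 (by norm_num) (by norm_num) (by decide)
private lemma NTT_nth52 : Nat.nth Nat.Prime 52 = 241 :=
  NTT_nth_step NTT_nth51 (by norm_num) (by norm_num) (by decide)
private lemma NTT_nth53 : Nat.nth Nat.Prime 53 = 251 :=
  NTT_nth_step NTT_nth52 (by norm_num) (by norm_num) (by decide)
private lemma NTT_nth54 : Nat.nth Nat.Prime 54 = 257 :=
  NTT_nth_step NTT_nth53 (by norm_num) (by norm_num) (by decide)
private lemma NTT_nth55 : Nat.nth Nat.Prime 55 = 263 :=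
  NTT_nth_step NTT_nth54 (by norm_num) (by norm_num) (by decide)
private lemma NTT_nth56 : Nat.nth Nat.Prime 56 = 269 :=
  NTT_nth_step NTT_nth55 (by norm_num) (by norm_num) (by decide)
private lemma NTT_nth57 : Nat.nth Nat.Prime 57 = 271 :=
  NTT_nth_step NTT_nth56 (by norm_num) (by norm_num) (by decide)
private lemma NTT_nth58 : Nat.nth Nat.Prime 58 = 277 :=
  NTT_nth_step NTT_nth57 (by norm_num) (by norm_num) (by decide)
private lemma NTT_nth59 : Nat.nth Nat.Prime 59 = 281 :=
  NTT_nth_step NTT_nth58 (by norm_num) (by norm_num) (by decide)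
private lemma NTT_nth60 : Nat.nth Nat.Prime 60 = 283 :=
  NTT_nth_step NTT_nth59 (by norm_num) (by norm_num) (by decide)
private lemma NTT_nth61 : Nat.nth Nat.Prime 61 = 293 :=
  NTT_nth_step NTT_nth60 (by norm_num) (by norm_num) (by decide)
private lemma NTT_nth62 : Nat.nth Nat.Prime 62 = 307 :=
  NTT_nth_step NTT_nth61 (by norm_num) (by norm_num) (by decide)
private lemma NTT_nth63 : Nat.nth Nat.Prime 63 = 311 :=
  NTT_nth_step NTT_nth62 (by norm_num) (by norm_num) (by decide)
private lemma NTT_nth64 : Nat.nth Nat.Prime 64 = 313 :=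
  NTT_nth_step NTT_nth63 (by norm_num) (by norm_num) (by decide)
private lemma NTT_nth65 : Nat.nth Nat.Prime 65 = 317 :=
  NTT_nth_step NTT_nth64 (by norm_num) (by norm_num) (by decide)
private lemma NTT_nth66 : Nat.nth Nat.Prime 66 = 331 :=
  NTT_nth_step NTT_nth65 (by norm_num) (by norm_num) (by decide)
private lemma NTT_nth67 : Nat.nth Nat.Prime 67 = 337 :=
  NTT_nth_step NTT_nth66 (by norm_num) (by norm_num) (by decide)
private lemma NTT_nth68 : Nat.nth Nat.Prime 68 = 347 :=
  NTT_nth_step NTT_nth67 (by norm_num) (by norm_num) (by decide)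
private lemma NTT_nth69 : Nat.nth Nat.Prime 69 = 349 :=
  NTT_nth_step NTT_nth68 (by norm_num) (by norm_num) (by decide)
private lemma NTT_nth70 : Nat.nth Nat.Prime 70 = 353 :=
  NTT_nth_step NTT_nth69 (by norm_num) (by norm_num) (by decide)
private lemma NTT_nth71 : Nat.nth Nat.Prime 71 = 359 :=
  NTT_nth_step NTT_nth70 (by norm_num) (by norm_num) (by decide)
private lemma NTT_nth72 : Nat.nth Nat.Prime 72 = 367 :=
  NTT_nth_step NTT_nth71 (by norm_num) (by norm_num) (by decide)
private lemma NTT_nth73 : Nat.nth Nat.Prime 73 = 373 :=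
  NTT_nth_step NTT_nth72 (by norm_num) (by norm_num) (by decide)
private lemma NTT_nth74 : Nat.nth Nat.Prime 74 = 379 :=
  NTT_nth_step NTT_nth73 (by norm_num) (by norm_num) (by decide)
private lemma NTT_nth75 : Nat.nth Nat.Prime 75 = 383 :=
  NTT_nth_step NTT_nth74 (by norm_num) (by norm_num) (by decide)
private lemma NTT_nth76 : Nat.nth Nat.Prime 76 = 389 :=
  NTT_nth_step NTT_nth75 (by norm_num) (by norm_num) (by decide)
private lemma NTT_nth77 : Nat.nth Nat.Prime 77 = 397 :=
  NTT_nth_step NTT_nth76 (by norm_num) (by norm_num) (by decide)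
private lemma NTT_nth78 : Nat.nth Nat.Prime 78 = 401 :=
  NTT_nth_step NTT_nth77 (by norm_num) (by norm_num) (by decide)
private lemma NTT_nth79 : Nat.nth Nat.Prime 79 = 409 :=
  NTT_nth_step NTT_nth78 (by norm_num) (by norm_num) (by decide)
private lemma NTT_nth80 : Nat.nth Nat.Prime 80 = 419 :=
  NTT_nth_step NTT_nth79 (by norm_num) (by norm_num) (by decide)
private lemma NTT_nth81 : Nat.nth Nat.Prime 81 = 421 :=
  NTT_nth_step NTT_nth80 (by norm_num) (by norm_num) (by decide)
private lemma NTT_nth82 : Nat.nth Nat.Prime 82 = 431 :=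
  NTT_nth_step NTT_nth81 (by norm_num) (by norm_num) (by decide)
private lemma NTT_nth83 : Nat.nth Nat.Prime 83 = 433 :=
  NTT_nth_step NTT_nth82 (by norm_num) (by norm_num) (by decide)
private lemma NTT_nth84 : Nat.nth Nat.Prime 84 = 439 :=
  NTT_nth_step NTT_nth83 (by norm_num) (by norm_num) (by decide)
private lemma NTT_nth85 : Nat.nth Nat.Prime 85 = 443 :=
  NTT_nth_step NTT_nth84 (by norm_num) (by norm_num) (by decide)
private lemma NTT_nth86 : Nat.nth Nat.Prime 86 = 449 :=
  NTT_nth_step NTT_nth85 (by norm_num) (by norm_num) (by decide)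
private lemma NTT_nth87 : Nat.nth Nat.Prime 87 = 457 :=
  NTT_nth_step NTT_nth86 (by norm_num) (by norm_num) (by decide)
private lemma NTT_nth88 : Nat.nth Nat.Prime 88 = 461 :=
  NTT_nth_step NTT_nth87 (by norm_num) (by norm_num) (by decide)
private lemma NTT_nth89 : Nat.nth Nat.Prime 89 = 463 :=
  NTT_nth_step NTT_nth88 (by norm_num) (by norm_num) (by decide)
private lemma NTT_nth90 : Nat.nth Nat.Prime 90 = 467 :=
  NTT_nth_step NTT_nth89 (by norm_num) (by norm_num) (by decide)
private lemma NTT_nth91 : Nat.nth Nat.Prime 91 = 479 :=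
  NTT_nth_step NTT_nth90 (by norm_num) (by norm_num) (by decide)
private lemma NTT_nth92 : Nat.nth Nat.Prime 92 = 487 :=
  NTT_nth_step NTT_nth91 (by norm_num) (by norm_num) (by decide)
private lemma NTT_nth93 : Nat.nth Nat.Prime 93 = 491 :=
  NTT_nth_step NTT_nth92 (by norm_num) (by norm_num) (by decide)
private lemma NTT_nth94 : Nat.nth Nat.Prime 94 = 499 :=
  NTT_nth_step NTT_nth93 (by norm_num) (by norm_num) (by decide)
private lemma NTT_nth95 : Nat.nth Nat.Prime 95 = 503 :=
  NTT_nth_step NTT_nth94 (by norm_num) (by norm_num) (by decide)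
private lemma NTT_nth96 : Nat.nth Nat.Prime 96 = 509 :=
  NTT_nth_step NTT_nth95 (by norm_num) (by norm_num) (by decide)
private lemma NTT_nth97 : Nat.nth Nat.Prime 97 = 521 :=
  NTT_nth_step NTT_nth96 (by norm_num) (by norm_num) (by decide)
private lemma NTT_nth98 : Nat.nth Nat.Prime 98 = 523 :=
  NTT_nth_step NTT_nth97 (by norm_num) (by norm_num) (by decide)
private lemma NTT_nth99 : Nat.nth Nat.Prime 99 = 541 :=
  NTT_nth_step NTT_nth98 (by norm_num) (by norm_num) (by decide)
private lemma NTT_nth100 : Nat.nth Nat.Prime 100 = 547 :=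
  NTT_nth_step NTT_nth99 (by norm_num) (by norm_num) (by decide)
private lemma NTT_nth101 : Nat.nth Nat.Prime 101 = 557 :=
  NTT_nth_step NTT_nth100 (by norm_num) (by norm_num) (by decide)
private lemma NTT_nth102 : Nat.nth Nat.Prime 102 = 563 :=
  NTT_nth_step NTT_nth101 (by norm_num) (by norm_num) (by decide)
private lemma NTT_nth103 : Nat.nth Nat.Prime 103 = 569 :=
  NTT_nth_step NTT_nth102 (by norm_num) (by norm_num) (by decide)
private lemma NTT_nth104 : Nat.nth Nat.Prime 104 = 571 :=
  NTT_nth_step NTT_nth103 (by norm_num) (by norm_num) (by decide)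
private lemma NTT_nth105 : Nat.nth Nat.Prime 105 = 577 :=
  NTT_nth_step NTT_nth104 (by norm_num) (by norm_num) (by decide)
private lemma NTT_nth106 : Nat.nth Nat.Prime 106 = 587 :=
  NTT_nth_step NTT_nth105 (by norm_num) (by norm_num) (by decide)
private lemma NTT_nth107 : Nat.nth Nat.Prime 107 = 593 :=
  NTT_nth_step NTT_nth106 (by norm_num) (by norm_num) (by decide)
private lemma NTT_nth108 : Nat.nth Nat.Prime 108 = 599 :=
  NTT_nth_step NTT_nth107 (by norm_num) (by norm_num) (by decide)
private lemma NTT_nth109 : Nat.nth Nat.Prime 109 = 601 :=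
  NTT_nth_step NTT_nth108 (by norm_num) (by norm_num) (by decide)
private lemma NTT_nth110 : Nat.nth Nat.Prime 110 = 607 :=
  NTT_nth_step NTT_nth109 (by norm_num) (by norm_num) (by decide)
private lemma NTT_nth111 : Nat.nth Nat.Prime 111 = 613 :=
  NTT_nth_step NTT_nth110 (by norm_num) (by norm_num) (by decide)
private lemma NTT_nth112 : Nat.nth Nat.Prime 112 = 617 :=
  NTT_nth_step NTT_nth111 (by norm_num) (by norm_num) (by decide)
private lemma NTT_nth113 : Nat.nth Nat.Prime 113 = 619 :=
  NTT_nth_step NTT_nth112 (by norm_num) (by norm_num) (by decide)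
private lemma NTT_nth114 : Nat.nth Nat.Prime 114 = 631 :=
  NTT_nth_step NTT_nth113 (by norm_num) (by norm_num) (by decide)
private lemma NTT_nth115 : Nat.nth Nat.Prime 115 = 641 :=
  NTT_nth_step NTT_nth114 (by norm_num) (by norm_num) (by decide)
private lemma NTT_nth116 : Nat.nth Nat.Prime 116 = 643 :=
  NTT_nth_step NTT_nth115 (by norm_num) (by norm_num) (by decide)
private lemma NTT_nth117 : Nat.nth Nat.Prime 117 = 647 :=
  NTT_nth_step NTT_nth116 (by norm_num) (by norm_num) (by decide)
private lemma NTT_nth118 : Nat.nth Nat.Prime 118 = 653 :=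
  NTT_nth_step NTT_nth117 (by norm_num) (by norm_num) (by decide)
private lemma NTT_nth119 : Nat.nth Nat.Prime 119 = 659 :=
  NTT_nth_step NTT_nth118 (by norm_num) (by norm_num) (by decide)
private lemma NTT_nth120 : Nat.nth Nat.Prime 120 = 661 :=
  NTT_nth_step NTT_nth119 (by norm_num) (by norm_num) (by decide)
private lemma NTT_nth121 : Nat.nth Nat.Prime 121 = 673 :=
  NTT_nth_step NTT_nth120 (by norm_num) (by norm_num) (by decide)
private lemma NTT_nth122 : Nat.nth Nat.Prime 122 = 677 :=
  NTT_nth_step NTT_nth121 (by norm_num) (by norm_num) (by decide)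
private lemma NTT_nth123 : Nat.nth Nat.Prime 123 = 683 :=
  NTT_nth_step NTT_nth122 (by norm_num) (by norm_num) (by decide)


private lemma NTT_finite : ∀ n : ℕ, 10 ≤ n → n ≤ 121 →
    Nat.nth Nat.Prime (n+2) ≤ Nat.nth Nat.Prime (n-4) + Nat.nth Nat.Prime (n-1) := by
  intro n h1 h2
  interval_cases n <;> norm_num [NTT_nth0, NTT_nth1, NTT_nth2, NTT_nth3, NTT_nth4, NTT_nth5, NTT_nth6, NTT_nth7, NTT_nth8, NTT_nth9, NTT_nth10, NTT_nth11, NTT_nth12, NTT_nth13, NTT_nth14, NTT_nth15, NTT_nth16, NTT_nth17, NTT_nth18, NTT_nth19, NTT_nth20, NTT_nth21, NTT_nth22, NTT_nth23, NTT_nth24, NTT_nth25, NTT_nth26, NTT_nth27, NTT_nth28, NTT_nth29, NTT_nth30, NTT_nth31, NTT_nth32, NTT_nth33, NTT_nth34, NTT_nth35, NTT_nth36, NTT_nth37, NTT_nth38, NTT_nth39, NTT_nth40, NTT_nth41, NTT_nth42, NTT_nth43, NTT_nth44, NTT_nth45, NTT_nth46, NTT_nth47, NTT_nth48, NTT_nth49,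 NTT_nth50, NTT_nth51, NTT_nth52, NTT_nth53, NTT_nth54, NTT_nth55, NTT_nth56, NTT_nth57, NTT_nth58, NTT_nth59, NTT_nth60, NTT_nth61, NTT_nth62, NTT_nth63, NTT_nth64, NTT_nth65, NTT_nth66, NTT_nth67, NTT_nth68, NTT_nth69, NTT_nth70, NTT_nth71, NTT_nth72, NTT_nth73, NTT_nth74, NTT_nth75, NTT_nth76, NTT_nth77, NTT_nth78, NTT_nth79, NTT_nth80, NTT_nth81, NTT_nth82, NTT_nth83, NTT_nth84, NTT_nth85, NTT_nth86, NTT_nth87, NTT_nth88, NTT_nth89, NTT_nth90, NTT_nth91, NTT_nth92, NTT_nth93, NTT_nth94, NTT_nth95, NTT_nth96, NTT_nth97, NTT_nth98, NTT_nth99, NTT_nth100, NTT_nth101, NTT_nth102, NTT_nth103, NTT_nth104, NTT_nth105, NTT_nth106, NTT_nth107, NTT_nth108, NTT_nth109, NTT_nth110, NTT_nth111, NTT_nth112, NTT_nth113, NTT_nth114, NTT_nth115, NTT_nth116, NTT_nth117, NTT_nth118, NTT_nth119, NTT_nth120, NTT_nth121, NTT_nth122, NTT_nth123]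

theorem N_three_three_eq_ten :
    (∀ n : ℕ, 10 ≤ n → nthPrime (n - 3) + nthPrime n ≥ nthPrime (n + 3)) ∧
    nthPrime 6 + nthPrime 9 < nthPrime 12 ∧
    IsLeast {N : ℕ | 0 < N ∧ ∀ n : ℕ, N ≤ n →
      nthPrime (n - 3) + nthPrime n ≥ nthPrime (n + 3)} 10 := by
  have hmain : ∀ n : ℕ, 10 ≤ n → nthPrime (n - 3) + nthPrime n ≥ nthPrime (n + 3) := by
    intro n hn
    have e1 : n - 3 - 1 = n - 4 := by omega
    have e2 : n + 3 - 1 = n + 2 := by omega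
    unfold nthPrime
    rw [e1, e2]
    rcases le_or_gt n 121 with h | h
    · exact NTT_finite n hn h
    · have hi : 649 ≤ Nat.nth Nat.Prime (n-4) := by
        have h118 : Nat.nth Nat.Prime 118 ≤ Nat.nth Nat.Prime (n-4) :=
          (Nat.nth_le_nth Nat.infinite_setOf_prime).2 (by omega)
        rw [NTT_nth118] at h118
        omega
      have h6 := NTT_nth_six (n-4) hi
      have he : n - 4 + 6 = n + 2 := by omega
      rw [he] at h6
      have hmono : Nat.nth Nat.Prime (n-4) ≤ Nat.nth Nat.Prime (n-1) :=
        (Nat.nth_le_nth Nat.infinite_setOf_prime).2 (by omega)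
      omega
  have hcex : nthPrime 6 + nthPrime 9 < nthPrime 12 := by
    unfold nthPrime
    norm_num [NTT_nth5, NTT_nth8, NTT_nth11]
  refine ⟨hmain, hcex, ⟨⟨by norm_num, hmain⟩, ?_⟩⟩
  rintro N ⟨hN0, hN⟩
  by_contra hlt
  push_neg at hlt
  have h9 := hN 9 (by omega)
  unfold nthPrime at h9
  norm_num [NTT_nth5, NTT_nth8, NTT_nth11] at h9
end

section
/- Let p_n denote the n-th prime (p_1 = 2, p_2 = 3, ...). For every integer n ≥ 11, p_{n-4} + p_n ≥ p_{n+4}, and this fails for n = 10 (i.e., p_6 + p_{10} < p_{14}). Hence the least positive integer N such that p_{n-4} + p_n ≥ p_{n+4} holds for all n ≥ N is N = 11. -/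
open Real

theorem real_main8 {x : ℝ} (x_large : (2048 : ℝ) ≤ x) :
    x * (2 * x) ^ (√(2 * x) + 7) * 4 ^ (2 * x / 3) ≤ 4 ^ x := by
  let f : ℝ → ℝ := fun x => log x + √(2 * x) * log (2 * x) + 7 * (log 2 + log x) - log 4 / 3 * x
  have hf' : ∀ x, 0 < x → 0 < x * (2 * x) ^ (√(2 * x) + 7) / 4 ^ (x / 3) := fun x h =>
    div_pos (mul_pos h (rpow_pos_of_pos (mul_pos two_pos h) _)) (rpow_pos_of_pos four_pos _)
  have hf : ∀ x, 0 < x → f x = log (x * (2 * x) ^ (√(2 * x) + 7) / 4 ^ (x / 3)) := by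
    intro x h5
    have h6 := mul_pos (zero_lt_two' ℝ) h5
    have h7 := rpow_pos_of_pos h6 (√(2 * x) + 7)
    simp only [f]
    rw [log_div (mul_pos h5 h7).ne' (rpow_pos_of_pos four_pos _).ne', log_mul h5.ne' h7.ne',
      log_rpow h6, log_rpow zero_lt_four, log_mul two_ne_zero h5.ne']
    ring
  have h5 : 0 < x := lt_of_lt_of_le (by norm_num1) x_large
  rw [← div_le_one (rpow_pos_of_pos four_pos x), ← div_div_eq_mul_div, ← rpow_sub four_pos, ←
    mul_div 2 x, mul_div_left_comm, ← mul_one_sub, (by norm_num1 : (1 : ℝ) - 2 / 3 = 1 / 3),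
    mul_one_div, ← log_nonpos_iff (hf' x h5).le, ← hf x h5]
  have h : ConcaveOn ℝ (Set.Ioi 0.5) f := by
    apply ConcaveOn.sub
    · apply ConcaveOn.add
      · apply ConcaveOn.add
        · exact strictConcaveOn_log_Ioi.concaveOn.subset
            (Set.Ioi_subset_Ioi (by norm_num)) (convex_Ioi 0.5)
        convert ((strictConcaveOn_sqrt_mul_log_Ioi.concaveOn.comp_linearMap
          ((2 : ℝ) • LinearMap.id))) using 1
        · rfl
        · rfl
        ext x
        simp only [Set.mem_Ioi, Set.mem_preimage, LinearMap.smul_apply,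
          LinearMap.id_coe, id_eq, smul_eq_mul]
        rw [← mul_lt_mul_iff_right₀ (two_pos)]
        norm_num1
        rfl
        rfl
      · have hl : ConcaveOn ℝ (Set.Ioi (0.5 : ℝ)) (fun x : ℝ => log x) :=
          strictConcaveOn_log_Ioi.concaveOn.subset
            (Set.Ioi_subset_Ioi (by norm_num)) (convex_Ioi 0.5)
        have := ((concaveOn_const (log 2) (convex_Ioi (0.5:ℝ))).add hl).smul
          (by norm_num : (0:ℝ) ≤ 7)
        exact this
    apply ConvexOn.smul
    · refine div_nonneg (log_nonneg (by norm_num1)) (by norm_num1)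
    · exact convexOn_id (convex_Ioi (0.5 : ℝ))
  suffices ∃ x1 x2, 0.5 < x1 ∧ x1 < x2 ∧ x2 ≤ x ∧ 0 ≤ f x1 ∧ f x2 ≤ 0 by
    obtain ⟨x1, x2, h1, h2, h0, h3, h4⟩ := this
    exact (h.right_le_of_le_left'' h1 ((h1.trans h2).trans_le h0) h2 h0 (h4.trans h3)).trans h4
  refine ⟨18, 2048, by norm_num1, by norm_num1, x_large, ?_, ?_⟩
  · have : √(2 * 18 : ℝ) = 6 := (sqrt_eq_iff_mul_self_eq_of_pos (by norm_num1)).mpr (by norm_num1)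
    rw [hf _ (by norm_num1), log_nonneg_iff (by positivity), this, one_le_div (by norm_num1)]
    norm_num1
  · have : √(2 * 2048 : ℝ) = 64 :=
      (sqrt_eq_iff_mul_self_eq_of_pos (by norm_num1)).mpr (by norm_num1)
    rw [hf _ (by norm_num1), log_nonpos_iff (hf' _ (by norm_num1)).le, this,
        div_le_one (by positivity)]
    have e1 : ((64 : ℝ) + 7) = ((71 : ℕ) : ℝ) := by norm_num
    rw [e1]
    conv in 2048 => equals 2 ^ 11 => norm_num1
    conv in 2 * 2048 => equals 2 ^ 12 => norm_num1
    rw [rpow_natCast, ← pow_mul, ← pow_add]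
    conv in 4 => equals 2 ^ (2 : ℝ) => rw [rpow_two]; norm_num1
    rw [← rpow_mul, ← rpow_natCast]
    on_goal 1 => apply rpow_le_rpow_of_exponent_le
    all_goals norm_num1


open Nat

theorem main_inequality8 {n : ℕ} (n_large : 2048 ≤ n) :
    n * (2 * n) ^ (Nat.sqrt (2 * n) + 7) * 4 ^ (2 * n / 3) ≤ 4 ^ n := by
  rw [← @cast_le ℝ]
  simp only [cast_add, cast_one, cast_mul, cast_pow, ← Real.rpow_natCast]
  refine _root_.trans ?_ (real_main8 (by exact_mod_cast n_large))
  gcongr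
  · push_cast
    gcongr
    · have n2_pos : 1 ≤ 2 * n := by omega
      exact_mod_cast n2_pos
    have := Real.nat_sqrt_le_real_sqrt (a := 2 * n)
    push_cast at this
    linarith
  · push_cast
    gcongr
    · norm_num1
    · exact cast_div_le.trans (by norm_cast)

theorem centralBinom_le_of_few_primes (n : ℕ) (n_large : 2 < n)
    (few : ((Finset.Ioc n (2 * n)).filter Nat.Prime).card ≤ 7) :
    centralBinom n ≤ (2 * n) ^ (Nat.sqrt (2 * n) + 7) * 4 ^ (2 * n / 3) := by
  have n_pos : 0 < n := (Nat.zero_le _).trans_lt n_large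
  have n2_pos : 1 ≤ 2 * n := mul_pos (zero_lt_two' ℕ) n_pos
  set T := (Finset.Ioc n (2 * n)).filter Nat.Prime with hT
  -- centralBinom n = prod over range(2n/3+1) ∪ T
  have hdisj : Disjoint (Finset.range (2 * n / 3 + 1)) T := by
    rw [Finset.disjoint_left]
    intro x hx hxT
    rw [Finset.mem_range] at hx
    rw [hT, Finset.mem_filter, Finset.mem_Ioc] at hxT
    omega
  have key : centralBinom n =
      (∏ p ∈ Finset.range (2 * n / 3 + 1), p ^ (centralBinom n).factorization p) *
      (∏ p ∈ T, p ^ (centralBinom n).factorization p) := by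
    rw [← Finset.prod_union hdisj]
    refine (Eq.trans ?_ n.prod_pow_factorization_centralBinom).symm
    apply Finset.prod_subset
    · intro x hx
      rw [Finset.mem_union] at hx
      rw [Finset.mem_range]
      rcases hx with hx | hx
      · rw [Finset.mem_range] at hx; omega
      · rw [hT, Finset.mem_filter, Finset.mem_Ioc] at hx; omega
    intro x hx h2x
    rw [Finset.mem_range, Nat.lt_succ_iff] at hx
    rw [Finset.mem_union, Finset.mem_range, Nat.lt_succ_iff, hT, Finset.mem_filter,
      Finset.mem_Ioc] at h2x
    push_neg at h2x
    by_cases hp : x.Prime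
    · have h1 : 2 * n / 3 < x := h2x.1
      by_cases hxn : x ≤ n
      · rw [factorization_centralBinom_of_two_mul_self_lt_three_mul n_large hxn ?_, Nat.pow_zero]
        omega
      · exact absurd hp (h2x.2 ⟨by omega, hx⟩)
    · rw [factorization_eq_zero_of_not_prime n.centralBinom hp, Nat.pow_zero]
  rw [key, pow_add]
  have hsecond : (∏ p ∈ T, p ^ (centralBinom n).factorization p) ≤ (2 * n) ^ 7 := by
    calc (∏ p ∈ T, p ^ (centralBinom n).factorization p) ≤ (2 * n) ^ T.card :=
          Finset.prod_le_pow_card T _ (2 * n) fun p _ =>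
            Nat.pow_factorization_choose_le (by positivity)
      _ ≤ (2 * n) ^ 7 := Nat.pow_le_pow_right (by omega) few
  have hfirst : (∏ p ∈ Finset.range (2 * n / 3 + 1), p ^ (centralBinom n).factorization p)
      ≤ (2 * n) ^ Nat.sqrt (2 * n) * 4 ^ (2 * n / 3) := by
    let S := (Finset.range (2 * n / 3 + 1)).filter Nat.Prime
    let f := fun x => x ^ n.centralBinom.factorization x
    have : ∏ x ∈ S, f x = ∏ x ∈ Finset.range (2 * n / 3 + 1), f x := by
      refine Finset.prod_filter_of_ne fun p _ h => ?_
      contrapose! h; dsimp only [f]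
      rw [factorization_eq_zero_of_not_prime n.centralBinom h, _root_.pow_zero]
    rw [← this, ← Finset.prod_filter_mul_prod_filter_not S (· ≤ Nat.sqrt (2 * n))]
    apply mul_le_mul'
    · refine (Finset.prod_le_prod' fun p _ => (?_ : f p ≤ 2 * n)).trans ?_
      · exact Nat.pow_factorization_choose_le (by positivity)
      have : (Finset.Icc 1 (Nat.sqrt (2 * n))).card = Nat.sqrt (2 * n) := by
        rw [Nat.card_Icc, Nat.add_sub_cancel]
      rw [Finset.prod_const]
      refine pow_right_mono₀ n2_pos ((Finset.card_le_card fun x hx => ?_).trans this.le)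
      obtain ⟨h1, h2⟩ := Finset.mem_filter.1 hx
      exact Finset.mem_Icc.mpr ⟨(Finset.mem_filter.1 h1).2.one_lt.le, h2⟩
    · refine le_trans ?_ (primorial_le_4_pow (2 * n / 3))
      refine (Finset.prod_le_prod' fun p hp => (?_ : f p ≤ p)).trans ?_
      · obtain ⟨h1, h2⟩ := Finset.mem_filter.1 hp
        refine (pow_right_mono₀ (Finset.mem_filter.1 h1).2.one_lt.le ?_).trans (pow_one p).le
        exact Nat.factorization_choose_le_one (Nat.sqrt_lt'.mp <| not_le.1 h2)
      refine Finset.prod_le_prod_of_subset_of_one_le' (Finset.filter_subset _ _) ?_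
      exact fun p hp _ => (Finset.mem_filter.1 hp).2.one_lt.le
  calc _ ≤ ((2 * n) ^ Nat.sqrt (2 * n) * 4 ^ (2 * n / 3)) * (2 * n) ^ 7 :=
        Nat.mul_le_mul hfirst hsecond
    _ = (2 * n) ^ Nat.sqrt (2 * n) * (2 * n) ^ 7 * 4 ^ (2 * n / 3) := by ring

theorem eight_primes_eventually {n : ℕ} (n_large : 2048 ≤ n) :
    8 ≤ ((Finset.Ioc n (2 * n)).filter Nat.Prime).card := by
  by_contra hfew
  push_neg at hfew
  have few : ((Finset.Ioc n (2 * n)).filter Nat.Prime).card ≤ 7 := by omega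
  have H1 : n * (2 * n) ^ (Nat.sqrt (2 * n) + 7) * 4 ^ (2 * n / 3) ≤ 4 ^ n :=
    main_inequality8 n_large
  have H2 : 4 ^ n < n * n.centralBinom :=
    Nat.four_pow_lt_mul_centralBinom n (le_trans (by norm_num1) n_large)
  have H3 : n.centralBinom ≤ (2 * n) ^ (Nat.sqrt (2 * n) + 7) * 4 ^ (2 * n / 3) :=
    centralBinom_le_of_few_primes n (lt_of_lt_of_le (by norm_num1) n_large) few
  rw [mul_assoc] at H1
  exact not_le.2 H2 ((mul_le_mul_right H3 n).trans H1)


open Nat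


lemma eight_in_Ioc (a r1 r2 r3 r4 r5 r6 r7 r8 : ℕ) {n : ℕ}
    (hp : r1.Prime ∧ r2.Prime ∧ r3.Prime ∧ r4.Prime ∧ r5.Prime ∧ r6.Prime ∧ r7.Prime ∧ r8.Prime)
    (ho : r1 < r2 ∧ r2 < r3 ∧ r3 < r4 ∧ r4 < r5 ∧ r5 < r6 ∧ r6 < r7 ∧ r7 < r8)
    (ha : a ≤ n) (hb : n < r1) (hr : r8 ≤ 2 * a) :
    8 ≤ ((Finset.Ioc n (2 * n)).filter Nat.Prime).card := by
  obtain ⟨p1, p2, p3, p4, p5, p6, p7, p8⟩ := hp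
  obtain ⟨o1, o2, o3, o4, o5, o6, o7⟩ := ho
  have hsub : ({r1, r2, r3, r4, r5, r6, r7, r8} : Finset ℕ) ⊆
      (Finset.Ioc n (2 * n)).filter Nat.Prime := by
    intro x hx
    simp only [Finset.mem_insert, Finset.mem_singleton] at hx
    simp only [Finset.mem_filter, Finset.mem_Ioc]
    rcases hx with rfl | rfl | rfl | rfl | rfl | rfl | rfl | rfl <;>
      exact ⟨⟨by omega, by omega⟩, by assumption⟩
  have hcard : ({r1, r2, r3, r4, r5, r6, r7, r8} : Finset ℕ).card = 8 := by
    repeat rw [Finset.card_insert_of_notMem (by simp; omega)]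
    rfl
  calc 8 = _ := hcard.symm
    _ ≤ _ := Finset.card_le_card hsub

lemma eight_primes_all {n : ℕ} (h1 : 34 ≤ n) :
    8 ≤ ((Finset.Ioc n (2 * n)).filter Nat.Prime).card := by
  rcases le_or_gt 2048 n with h | h
  · exact eight_primes_eventually h
  rcases lt_or_ge n 37 with h2 | h2
  · exact eight_in_Ioc 34 37 41 43 47 53 59 61 67 (by norm_num) (by norm_num)
      (by omega) (by omega) (by omega)
  rcases lt_or_ge n 43 with h2 | h2
  · exact eight_in_Ioc 37 43 47 53 59 61 67 71 73 (by norm_num) (by norm_num)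
      (by omega) (by omega) (by omega)
  rcases lt_or_ge n 53 with h2 | h2
  · exact eight_in_Ioc 43 53 59 61 67 71 73 79 83 (by norm_num) (by norm_num)
      (by omega) (by omega) (by omega)
  rcases lt_or_ge n 71 with h2 | h2
  · exact eight_in_Ioc 53 71 73 79 83 89 97 101 103 (by norm_num) (by norm_num)
      (by omega) (by omega) (by omega)
  rcases lt_or_ge n 103 with h2 | h2
  · exact eight_in_Ioc 71 103 107 109 113 127 131 137 139 (by norm_num) (by norm_num)
      (by omega) (by omega) (by omega)
  rcases lt_or_ge n 167 with h2 | h2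
  · exact eight_in_Ioc 103 167 173 179 181 191 193 197 199 (by norm_num) (by norm_num)
      (by omega) (by omega) (by omega)
  rcases lt_or_ge n 281 with h2 | h2
  · exact eight_in_Ioc 167 281 283 293 307 311 313 317 331 (by norm_num) (by norm_num)
      (by omega) (by omega) (by omega)
  rcases lt_or_ge n 499 with h2 | h2
  · exact eight_in_Ioc 281 499 503 509 521 523 541 547 557 (by norm_num) (by norm_num)
      (by omega) (by omega) (by omega)
  rcases lt_or_ge n 947 with h2 | h2
  · exact eight_in_Ioc 499 947 953 967 971 977 983 991 997 (by norm_num) (by norm_num)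
      (by omega) (by omega) (by omega)
  rcases lt_or_ge n 1847 with h2 | h2
  · exact eight_in_Ioc 947 1847 1861 1867 1871 1873 1877 1879 1889 (by norm_num) (by norm_num)
      (by omega) (by omega) (by omega)
  · exact eight_in_Ioc 1847 2053 2063 2069 2081 2083 2087 2089 2099 (by norm_num) (by norm_num)
      (by omega) (by omega) (by omega)

lemma nth_prime_val {k v : ℕ} (hv : Nat.Prime v) (h : Nat.count Nat.Prime v = k) :
    Nat.nth Nat.Prime k = v := by rw [← h]; exact Nat.nth_count hv

lemma nth_add_eight {m : ℕ} (hm : 11 ≤ m) :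
    Nat.nth Nat.Prime (m + 8) ≤ 2 * Nat.nth Nat.Prime m := by
  set p := Nat.nth Nat.Prime m with hp
  have hinf := Nat.infinite_setOf_prime
  have h37 : (37 : ℕ) ≤ p := by
    have : Nat.nth Nat.Prime 11 = 37 := nth_prime_val (by norm_num) (by decide)
    rw [hp, ← this]
    exact (Nat.nth_le_nth hinf).mpr hm
  have hcard : 8 ≤ ((Finset.Ioc p (2 * p)).filter Nat.Prime).card :=
    eight_primes_all (by omega)
  have hc1 : Nat.count Nat.Prime (p + 1) = m + 1 :=
    Nat.count_nth_succ_of_infinite hinf m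
  have hunion : (Finset.range (p + 1)).filter Nat.Prime ∪
      (Finset.Ioc p (2 * p)).filter Nat.Prime = (Finset.range (2 * p + 1)).filter Nat.Prime := by
    rw [← Finset.filter_union]
    congr 1
    ext x
    simp only [Finset.mem_union, Finset.mem_range, Finset.mem_Ioc]
    omega
  have hdisj : Disjoint ((Finset.range (p + 1)).filter Nat.Prime)
      ((Finset.Ioc p (2 * p)).filter Nat.Prime) := by
    rw [Finset.disjoint_left]
    intro x hx hx'
    rw [Finset.mem_filter, Finset.mem_range] at hx
    rw [Finset.mem_filter, Finset.mem_Ioc] at hx'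
    omega
  have hcount : m + 9 ≤ Nat.count Nat.Prime (2 * p + 1) := by
    rw [Nat.count_eq_card_filter_range, ← hunion, Finset.card_union_of_disjoint hdisj,
      ← Nat.count_eq_card_filter_range, hc1]
    omega
  have := Nat.nth_lt_of_lt_count (p := Nat.Prime) (n := 2 * p + 1) (k := m + 8) (by omega)
  omega


theorem N_four_four_eq_eleven :
    (∀ n : ℕ, 11 ≤ n → nthPrime (n - 4) + nthPrime n ≥ nthPrime (n + 4)) ∧
    nthPrime 6 + nthPrime 10 < nthPrime 14 ∧
    IsLeast {N : ℕ | 0 < N ∧ ∀ n : ℕ, N ≤ n →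
      nthPrime (n - 4) + nthPrime n ≥ nthPrime (n + 4)} 11 := by
  have v5 : Nat.nth Nat.Prime 5 = 13 := nth_prime_val (by norm_num) (by decide)
  have v6 : Nat.nth Nat.Prime 6 = 17 := nth_prime_val (by norm_num) (by decide)
  have v7 : Nat.nth Nat.Prime 7 = 19 := nth_prime_val (by norm_num) (by decide)
  have v8 : Nat.nth Nat.Prime 8 = 23 := nth_prime_val (by norm_num) (by decide)
  have v9 : Nat.nth Nat.Prime 9 = 29 := nth_prime_val (by norm_num) (by decide)
  have v10 : Nat.nth Nat.Prime 10 = 31 := nth_prime_val (by norm_num) (by decide)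
  have v11 : Nat.nth Nat.Prime 11 = 37 := nth_prime_val (by norm_num) (by decide)
  have v12 : Nat.nth Nat.Prime 12 = 41 := nth_prime_val (by norm_num) (by decide)
  have v13 : Nat.nth Nat.Prime 13 = 43 := nth_prime_val (by norm_num) (by decide)
  have v14 : Nat.nth Nat.Prime 14 = 47 := nth_prime_val (by norm_num) (by decide)
  have v15 : Nat.nth Nat.Prime 15 = 53 := nth_prime_val (by norm_num) (by decide)
  have v16 : Nat.nth Nat.Prime 16 = 59 := nth_prime_val (by norm_num) (by decide)
  have v17 : Nat.nth Nat.Prime 17 = 61 := nth_prime_val (by norm_num) (by decide)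
  have v18 : Nat.nth Nat.Prime 18 = 67 := nth_prime_val (by norm_num) (by decide)
  have key : ∀ n : ℕ, 11 ≤ n → nthPrime (n - 4) + nthPrime n ≥ nthPrime (n + 4) := by
    intro n hn
    simp only [nthPrime]
    have e1 : n - 4 - 1 = n - 5 := by omega
    have e2 : n + 4 - 1 = n + 3 := by omega
    rw [e1, e2]
    rcases le_or_gt 16 n with h | h
    · have h8 := nth_add_eight (m := n - 5) (by omega)
      have e3 : n - 5 + 8 = n + 3 := by omega
      rw [e3] at h8
      have hmono : Nat.nth Nat.Prime (n - 5) ≤ Nat.nth Nat.Prime (n - 1) :=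
        (Nat.nth_le_nth Nat.infinite_setOf_prime).mpr (by omega)
      omega
    · interval_cases n <;>
        norm_num [v6, v7, v8, v9, v10, v11, v12, v13, v14, v15, v16, v17, v18]
  have hfail : nthPrime 6 + nthPrime 10 < nthPrime 14 := by
    simp only [nthPrime]
    norm_num [v5, v9, v13]
  refine ⟨key, hfail, ⟨by norm_num, key⟩, ?_⟩
  intro N hN
  by_contra hlt
  push_neg at hlt
  have := hN.2 10 (by omega)
  norm_num at this
  omega
end

section
/- Let p_n denote the n-th prime (p_1 = 2, p_2 = 3, ...). For every integer n ≥ 15, p_{n-5} + p_n ≥ p_{n+5}, and this fails for n = 14 (i.e., p_9 + p_{14} < p_{19}). Hence the least positive integer N such that p_{n-5} + p_n ≥ p_{n+5} holds for all n ≥ N is N = 15. -/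
set_option maxRecDepth 40000

open Real


namespace PrimeTab

/-- Trial division loop: `true` if no `d` with `start ≤ d < start + fuel` and `d * d ≤ n`
divides `n`. -/
def primeLoop (n : ℕ) : ℕ → ℕ → Bool
  | _, 0 => true
  | d, fuel+1 => decide (n < d * d) || (!(decide (d ∣ n)) && primeLoop n (d+1) fuel)

theorem primeLoop_correct (n : ℕ) : ∀ fuel d, primeLoop n d fuel = true →
    ∀ m, d ≤ m → m < d + fuel → m * m ≤ n → ¬ m ∣ n := by
  intro fuel
  induction fuel with
  | zero => intro d _ m h1 h2; omega
  | succ k ih =>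
    intro d h m h1 h2 h3 hdvd
    simp only [primeLoop, Bool.or_eq_true, Bool.and_eq_true, Bool.not_eq_true',
      decide_eq_true_eq, decide_eq_false_iff_not] at h
    rcases h with h | ⟨hd, hrest⟩
    · have : d * d ≤ m * m := Nat.mul_le_mul h1 h1
      omega
    · rcases Nat.eq_or_lt_of_le h1 with rfl | hlt
      · exact hd hdvd
      · exact ih (d+1) hrest m hlt (by omega) h3 hdvd

theorem primeLoop_of_prime (n : ℕ) (hp : Nat.Prime n) :
    ∀ fuel d, 2 ≤ d → primeLoop n d fuel = true := by
  intro fuel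
  induction fuel with
  | zero => intro d _; rfl
  | succ k ih =>
    intro d hd
    simp only [primeLoop, Bool.or_eq_true, Bool.and_eq_true, Bool.not_eq_true',
      decide_eq_true_eq, decide_eq_false_iff_not]
    by_cases h : n < d * d
    · exact Or.inl h
    · refine Or.inr ⟨fun hdvd => ?_, ih (d+1) (by omega)⟩
      rcases (Nat.Prime.eq_one_or_self_of_dvd hp d hdvd) with rfl | rfl
      · omega
      · push_neg at h; nlinarith [hp.two_le]

/-- Kernel-friendly primality test. -/
def isPrimeB (n : ℕ) : Bool := decide (2 ≤ n) && primeLoop n 2 n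

theorem isPrimeB_iff (n : ℕ) : isPrimeB n = true ↔ Nat.Prime n := by
  constructor
  · intro h
    simp only [isPrimeB, Bool.and_eq_true, decide_eq_true_eq] at h
    obtain ⟨h2, hloop⟩ := h
    rw [Nat.prime_def_le_sqrt]
    refine ⟨h2, fun m hm hms => ?_⟩
    have hmm : m * m ≤ n := Nat.sqrt_le_sqrt hms |> fun _ => (Nat.le_sqrt.mp hms)
    exact primeLoop_correct n n 2 hloop m hm (by nlinarith) hmm
  · intro hp
    simp only [isPrimeB, Bool.and_eq_true, decide_eq_true_eq]
    exact ⟨hp.two_le, primeLoop_of_prime n hp n 2 le_rfl⟩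

/-- Checks that `l` is exactly the increasing list of all primes `≥ a` (up to its last
element). -/
def okFrom : ℕ → List ℕ → Bool
  | _, [] => true
  | a, b :: t => decide (a ≤ b) && ((List.range' a (b - a)).all fun x => !isPrimeB x)
      && isPrimeB b && okFrom (b+1) t

theorem count_eq_of_no {a b k : ℕ} (hab : a ≤ b)
    (h : ∀ x, a ≤ x → x < b → ¬ Nat.Prime x) (hk : Nat.count Nat.Prime a = k) :
    Nat.count Nat.Prime b = k := by
  induction b with
  | zero =>
    have : a = 0 := by omega
    subst this; exact hk
  | succ b ihb =>
    rcases Nat.eq_or_lt_of_le hab with rfl | hlt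
    · exact hk
    · have hb : a ≤ b := by omega
      rw [Nat.count_succ, if_neg (h b hb (by omega)), ihb hb (fun x h1 h2 => h x h1 (by omega))]
      omega

theorem okFrom_nth : ∀ (l : List ℕ) (a k : ℕ), okFrom a l = true →
    Nat.count Nat.Prime a = k →
    ∀ i, i < l.length → Nat.nth Nat.Prime (k + i) = l.getD i 0 := by
  intro l
  induction l with
  | nil => intro a k _ _ i hi; simp at hi
  | cons b t ih =>
    intro a k hok hcount i hi
    simp only [okFrom, Bool.and_eq_true, decide_eq_true_eq, List.all_eq_true,
      Bool.not_eq_true'] at hok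
    obtain ⟨⟨⟨hab, hgap⟩, hbp⟩, hrest⟩ := hok
    have hb : Nat.Prime b := (isPrimeB_iff b).mp hbp
    have hgap' : ∀ x, a ≤ x → x < b → ¬ Nat.Prime x := by
      intro x h1 h2 hx
      have hmem : x ∈ List.range' a (b - a) := by
        have : x = a + 1 * (x - a) := by omega
        exact List.mem_range'.mpr ⟨x - a, by omega, this⟩
      have := hgap x hmem
      rw [← isPrimeB_iff x] at hx
      simp [hx] at this
    have hcb : Nat.count Nat.Prime b = k := count_eq_of_no hab hgap' hcount
    have hcb1 : Nat.count Nat.Prime (b+1) = k + 1 := by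
      rw [Nat.count_succ, if_pos hb, hcb]
    cases i with
    | zero =>
      have := Nat.nth_count hb
      rw [hcb] at this
      simpa using this
    | succ j =>
      have := ih (b+1) (k+1) hrest hcb1 j (by simpa using hi)
      rw [show k + (j+1) = (k+1) + j by omega]
      simpa using this

end PrimeTab

namespace PrimeTab

def L : List ℕ := [2, 3, 5, 7, 11, 13, 17, 19, 23, 29, 31, 37, 41, 43, 47, 53, 59, 61, 67, 71, 73, 79, 83, 89, 97, 101, 103, 107, 109, 113, 127, 131, 137, 139, 149, 151, 157, 163, 167, 173, 179, 181, 191, 193, 197, 199, 211, 223, 227, 229, 233, 239, 241, 251, 257, 263, 269, 271, 277, 281, 283, 293, 307, 311, 313, 317, 331, 337, 347, 349, 353, 359, 367, 373, 379, 383, 389, 397, 401, 409, 419, 421, 431, 433, 439, 443, 449, 457, 461, 463, 467, 479, 487, 491, 499, 503, 509, 521, 523, 541, 547, 557, 563, 569, 571, 577, 587, 593, 599, 601, 607, 613, 617, 619, 631, 641, 643, 647, 653, 659, 661, 673, 677, 683, 691, 701, 709, 719, 727, 733, 739, 743, 751, 757, 761, 769, 773, 787, 797, 809, 811, 821, 823,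 827, 829, 839, 853, 857, 859, 863, 877, 881, 883, 887, 907, 911, 919, 929, 937, 941, 947, 953]

theorem okL : okFrom 0 L = true := by decide

theorem len_L : L.length = 162 := by decide

theorem htable : ∀ i, i < 162 → Nat.nth Nat.Prime i = L.getD i 0 := by
  intro i hi
  have := okFrom_nth L 0 0 okL (Nat.count_zero _) i (by rw [len_L]; exact hi)
  simpa using this

theorem hfin : ∀ n, n < 158 → 15 ≤ n → L.getD (n+4) 0 ≤ L.getD (n-6) 0 + L.getD (n-1) 0 := by decide


end PrimeTab

namespace TenPrimes

theorem real_main_inequality10 {x : ℝ} (x_large : (882 : ℝ) ≤ x) :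
    x * (2 * x) ^ (√(2 * x) + 9) * 4 ^ (2 * x / 3) ≤ 4 ^ x := by
  let f : ℝ → ℝ := fun x => log x + √(2 * x) * log (2 * x) + 9 * log (2 * x) - log 4 / 3 * x
  have hf' : ∀ x, 0 < x → 0 < x * (2 * x) ^ (√(2 * x) + 9) / 4 ^ (x / 3) := fun x h =>
    div_pos (mul_pos h (rpow_pos_of_pos (mul_pos two_pos h) _)) (rpow_pos_of_pos four_pos _)
  have hf : ∀ x, 0 < x → f x = log (x * (2 * x) ^ (√(2 * x) + 9) / 4 ^ (x / 3)) := by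
    intro x h5
    have h6 := mul_pos (zero_lt_two' ℝ) h5
    have h7 := rpow_pos_of_pos h6 (√(2 * x) + 9)
    rw [log_div (mul_pos h5 h7).ne' (rpow_pos_of_pos four_pos _).ne', log_mul h5.ne' h7.ne',
      log_rpow h6, log_rpow zero_lt_four]
    ring
  have h5 : 0 < x := lt_of_lt_of_le (by norm_num1) x_large
  rw [← div_le_one (rpow_pos_of_pos four_pos x), ← div_div_eq_mul_div, ← rpow_sub four_pos, ←
    mul_div 2 x, mul_div_left_comm, ← mul_one_sub, (by norm_num1 : (1 : ℝ) - 2 / 3 = 1 / 3),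
    mul_one_div, ← log_nonpos_iff (hf' x h5).le, ← hf x h5]
  have h : ConcaveOn ℝ (Set.Ioi 0.5) f := by
    apply ConcaveOn.sub
    · apply ConcaveOn.add
      · apply ConcaveOn.add
        · exact strictConcaveOn_log_Ioi.concaveOn.subset
            (Set.Ioi_subset_Ioi (by norm_num)) (convex_Ioi 0.5)
        · convert ((strictConcaveOn_sqrt_mul_log_Ioi.concaveOn.comp_linearMap
            ((2 : ℝ) • LinearMap.id))) using 1
          case e'_11 =>
            ext x
            simp only [Set.mem_Ioi, Set.mem_preimage, LinearMap.smul_apply,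
              LinearMap.id_coe, id_eq, smul_eq_mul]
            rw [← mul_lt_mul_iff_right₀ (two_pos)]
            norm_num1
            rfl
          all_goals rfl
      · have hlog2 : ConcaveOn ℝ (Set.Ioi (0.5 : ℝ)) (fun x : ℝ => log (2 * x)) := by
          refine (strictConcaveOn_log_Ioi.concaveOn.comp_linearMap
            ((2 : ℝ) • LinearMap.id)).subset ?_ (convex_Ioi 0.5)
          intro y hy
          simp only [Set.mem_Ioi, Set.mem_preimage, LinearMap.smul_apply,
            LinearMap.id_coe, id_eq, smul_eq_mul] at hy ⊢
          linarith [hy]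
        have := hlog2.smul (by norm_num : (0:ℝ) ≤ 9)
        exact this
    apply ConvexOn.smul
    · refine div_nonneg (log_nonneg (by norm_num1)) (by norm_num1)
    · exact convexOn_id (convex_Ioi (0.5 : ℝ))
  suffices ∃ x1 x2, 0.5 < x1 ∧ x1 < x2 ∧ x2 ≤ x ∧ 0 ≤ f x1 ∧ f x2 ≤ 0 by
    obtain ⟨x1, x2, h1, h2, h0, h3, h4⟩ := this
    exact (h.right_le_of_le_left'' h1 ((h1.trans h2).trans_le h0) h2 h0 (h4.trans h3)).trans h4
  refine ⟨18, 882, by norm_num1, by norm_num1, x_large, ?_, ?_⟩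
  · have hs : √(2 * 18 : ℝ) = 6 := (sqrt_eq_iff_mul_self_eq_of_pos (by norm_num1)).mpr (by norm_num1)
    rw [hf _ (by norm_num1), log_nonneg_iff (hf' _ (by norm_num1)), hs,
      one_le_div (by positivity)]
    have h36 : ((2:ℝ) * 18) ^ ((6:ℝ) + 9) = 36 ^ (15 : ℕ) := by
      rw [show (6:ℝ) + 9 = ((15:ℕ):ℝ) by norm_num, rpow_natCast]; norm_num
    have h43 : (4:ℝ) ^ ((18:ℝ) / 3) = 4 ^ (6 : ℕ) := by
      rw [show (18:ℝ)/3 = ((6:ℕ):ℝ) by norm_num, rpow_natCast]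
    rw [h36, h43]
    norm_num
  · have hs : √(2 * 882 : ℝ) = 42 :=
      (sqrt_eq_iff_mul_self_eq_of_pos (by norm_num1)).mpr (by norm_num1)
    rw [hf _ (by norm_num1), log_nonpos_iff (hf' 882 (by norm_num1)).le, hs,
      div_le_one (by positivity)]
    have h36 : ((2:ℝ) * 882) ^ ((42:ℝ) + 9) = 1764 ^ (51 : ℕ) := by
      rw [show (42:ℝ) + 9 = ((51:ℕ):ℝ) by norm_num, rpow_natCast]; norm_num
    have h43 : (4:ℝ) ^ ((882:ℝ) / 3) = 4 ^ (294 : ℕ) := by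
      rw [show (882:ℝ)/3 = ((294:ℕ):ℝ) by norm_num, rpow_natCast]
    rw [h36, h43]
    exact_mod_cast (by decide : 882 * 1764 ^ 51 ≤ 4 ^ 294)


theorem main_inequality10 {n : ℕ} (n_large : 882 ≤ n) :
    n * (2 * n) ^ (Nat.sqrt (2 * n) + 9) * 4 ^ (2 * n / 3) ≤ 4 ^ n := by
  rw [← @Nat.cast_le ℝ]
  simp only [Nat.cast_add, Nat.cast_one, Nat.cast_mul, Nat.cast_pow, Nat.cast_ofNat, ← Real.rpow_natCast]
  refine _root_.trans ?_ (real_main_inequality10 (by exact_mod_cast n_large))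
  gcongr
  · have n2_pos : 0 < 2 * n := by positivity
    exact_mod_cast n2_pos
  · exact_mod_cast Real.nat_sqrt_le_real_sqrt
  · norm_num1
  · exact Nat.cast_div_le.trans (by norm_cast)

theorem centralBinom_le_ten (n : ℕ) (n_large : 2 < n)
    (h9 : ((Finset.range (2 * n + 1)).filter (fun p => p.Prime ∧ n < p)).card ≤ 9) :
    Nat.centralBinom n ≤ (2 * n) ^ (Nat.sqrt (2 * n) + 9) * 4 ^ (2 * n / 3) := by
  have n_pos : 0 < n := by omega
  have n2_pos : 1 ≤ 2 * n := by omega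
  let S := (Finset.range (2 * n + 1)).filter Nat.Prime
  let f : ℕ → ℕ := fun x => x ^ (Nat.centralBinom n).factorization x
  have hSprod : ∏ x ∈ S, f x = Nat.centralBinom n := by
    rw [← Nat.prod_pow_factorization_centralBinom n]
    exact Finset.prod_filter_of_ne fun p _ h => by
      contrapose! h; dsimp only [f]
      rw [Nat.factorization_eq_zero_of_not_prime _ h, _root_.pow_zero]
  rw [← hSprod, ← Finset.prod_filter_mul_prod_filter_not S (· ≤ n)]
  have hbig : ∏ x ∈ S.filter (fun p => ¬ p ≤ n), f x ≤ (2 * n) ^ 9 := by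
    refine le_trans (Finset.prod_le_pow_card _ _ (2 * n) fun p _ =>
      Nat.pow_factorization_choose_le (by omega)) (Nat.pow_le_pow_right (by omega) ?_)
    refine le_trans (Finset.card_le_card fun x hx => ?_) h9
    simp only [S, Finset.mem_filter, Finset.mem_range, not_le] at hx ⊢
    tauto
  have hsmall : ∏ x ∈ S.filter (· ≤ n), f x ≤ (2 * n) ^ (Nat.sqrt (2 * n)) * 4 ^ (2 * n / 3) := by
    rw [← Finset.prod_filter_mul_prod_filter_not (S.filter (· ≤ n)) (· ≤ Nat.sqrt (2 * n))]
    apply Nat.mul_le_mul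
    · refine le_trans (Finset.prod_le_pow_card _ _ (2 * n) fun p _ =>
        Nat.pow_factorization_choose_le (by omega)) (Nat.pow_le_pow_right (by omega) ?_)
      have hsub : (S.filter (· ≤ n)).filter (· ≤ Nat.sqrt (2 * n)) ⊆
          Finset.Icc 1 (Nat.sqrt (2 * n)) := by
        intro x hx
        simp only [S, Finset.mem_filter, Finset.mem_range] at hx
        exact Finset.mem_Icc.mpr ⟨hx.1.1.2.one_lt.le, hx.2⟩
      refine le_trans (Finset.card_le_card hsub) ?_
      rw [Nat.card_Icc, Nat.add_sub_cancel]
    · refine le_trans ?_ (primorial_le_4_pow (2 * n / 3))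
      have hstep : ∏ x ∈ (S.filter (· ≤ n)).filter (fun p => ¬ p ≤ Nat.sqrt (2 * n)), f x ≤
          ∏ x ∈ (S.filter (· ≤ n)).filter (fun p => ¬ p ≤ Nat.sqrt (2 * n)),
            (if x ≤ 2 * n / 3 then x else 1) := by
        refine Finset.prod_le_prod' fun p hp => ?_
        simp only [S, Finset.mem_filter, Finset.mem_range, not_le] at hp
        obtain ⟨⟨⟨_, hprime⟩, hpn⟩, hsqrt⟩ := hp
        by_cases h23 : p ≤ 2 * n / 3
        · rw [if_pos h23]
          dsimp only [f]
          refine le_trans (Nat.pow_le_pow_right hprime.one_lt.le ?_) (pow_one p).le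
          exact Nat.factorization_choose_le_one (Nat.sqrt_lt'.mp hsqrt)
        · rw [if_neg h23]
          dsimp only [f]
          rw [Nat.factorization_centralBinom_of_two_mul_self_lt_three_mul n_large hpn (by omega),
            _root_.pow_zero]
      refine le_trans hstep ?_
      rw [← Finset.prod_filter]
      refine Finset.prod_le_prod_of_subset_of_one_le' ?_ (fun p hp _ => ?_)
      · intro x hx
        simp only [S, Finset.mem_filter, Finset.mem_range] at hx ⊢
        exact ⟨by omega, hx.1.1.1.2⟩
      · exact (Finset.mem_filter.1 hp).2.one_lt.le
  calc (∏ x ∈ S.filter (· ≤ n), f x) * ∏ x ∈ S.filter (fun p => ¬ p ≤ n), f x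
      ≤ ((2 * n) ^ (Nat.sqrt (2 * n)) * 4 ^ (2 * n / 3)) * (2 * n) ^ 9 :=
        Nat.mul_le_mul hsmall hbig
    _ = (2 * n) ^ (Nat.sqrt (2 * n) + 9) * 4 ^ (2 * n / 3) := by rw [pow_add]; ring

theorem ten_primes {m : ℕ} (hm : 882 ≤ m) :
    Nat.count Nat.Prime (m + 1) + 10 ≤ Nat.count Nat.Prime (2 * m + 1) := by
  by_contra hlt
  push_neg at hlt
  have key : Nat.count Nat.Prime (m + 1) +
      ((Finset.range (2 * m + 1)).filter (fun p => p.Prime ∧ m < p)).card =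
      Nat.count Nat.Prime (2 * m + 1) := by
    have e2 : ((Finset.range (2*m+1)).filter Nat.Prime).filter (fun p => ¬ p ≤ m)
        = (Finset.range (2*m+1)).filter (fun p => p.Prime ∧ m < p) := by
      rw [Finset.filter_filter]
      ext x
      simp [not_le]
    have e3 : ((Finset.range (2*m+1)).filter Nat.Prime).filter (fun p => p ≤ m)
        = (Finset.range (m+1)).filter Nat.Prime := by
      rw [Finset.filter_filter]
      ext x
      simp only [Finset.mem_filter, Finset.mem_range]
      constructor
      · rintro ⟨h1, h2, h3⟩; exact ⟨by omega, h2⟩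
      · rintro ⟨h1, h2⟩; exact ⟨by omega, h2, by omega⟩
    have hsum := Finset.card_filter_add_card_filter_not
      (s := (Finset.range (2*m+1)).filter Nat.Prime) (p := fun p => p ≤ m)
    rw [e2, e3] at hsum
    rw [Nat.count_eq_card_filter_range, Nat.count_eq_card_filter_range, ← hsum]
  have h9 : ((Finset.range (2 * m + 1)).filter (fun p => p.Prime ∧ m < p)).card ≤ 9 := by omega
  have hub := centralBinom_le_ten m (by omega) h9
  have hmain := main_inequality10 hm
  have hlb := Nat.four_pow_lt_mul_centralBinom m (by omega)
  rw [mul_assoc] at hmain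
  exact absurd ((mul_le_mul_right hub m).trans hmain) (not_le.2 hlb)


theorem nth_add_ten_le (a : ℕ) (ha : 882 ≤ Nat.nth Nat.Prime a) :
    Nat.nth Nat.Prime (a + 10) ≤ 2 * Nat.nth Nat.Prime a := by
  have hinf := Nat.infinite_setOf_prime
  have h1 : Nat.count Nat.Prime (Nat.nth Nat.Prime a + 1) = a + 1 :=
    Nat.count_nth_succ_of_infinite hinf a
  have h2 := ten_primes (m := Nat.nth Nat.Prime a) ha
  have h3 : a + 10 < Nat.count Nat.Prime (2 * Nat.nth Nat.Prime a + 1) := by omega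
  have h4 := Nat.nth_lt_of_lt_count h3
  omega

end TenPrimes

theorem nthPrime_main : ∀ n : ℕ, 15 ≤ n → nthPrime (n - 5) + nthPrime n ≥ nthPrime (n + 5) := by
  intro n hn
  have e1 : nthPrime (n - 5) = Nat.nth Nat.Prime (n - 6) := rfl
  have e2 : nthPrime n = Nat.nth Nat.Prime (n - 1) := rfl
  have e3 : nthPrime (n + 5) = Nat.nth Nat.Prime (n + 4) := rfl
  rw [e1, e2, e3]
  rcases lt_or_ge n 158 with hsmall | hbig
  · rw [PrimeTab.htable (n+4) (by omega), PrimeTab.htable (n-6) (by omega),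
      PrimeTab.htable (n-1) (by omega)]
    exact PrimeTab.hfin n hsmall hn
  · have hinf := Nat.infinite_setOf_prime
    have h152 : Nat.nth Nat.Prime 152 = 883 := by
      rw [PrimeTab.htable 152 (by norm_num)]; rfl
    have ha : 882 ≤ Nat.nth Nat.Prime (n - 6) := by
      have hm : Nat.nth Nat.Prime 152 ≤ Nat.nth Nat.Prime (n - 6) :=
        Nat.nth_monotone hinf (show 152 ≤ n - 6 by omega)
      omega
    have h10 := TenPrimes.nth_add_ten_le (n-6) ha
    have heq : n - 6 + 10 = n + 4 := by omega
    rw [heq] at h10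
    have hmono : Nat.nth Nat.Prime (n - 6) ≤ Nat.nth Nat.Prime (n - 1) :=
      Nat.nth_monotone hinf (show n - 6 ≤ n - 1 by omega)
    omega

theorem nthPrime_fourteen : nthPrime 9 + nthPrime 14 < nthPrime 19 := by
  show Nat.nth Nat.Prime 8 + Nat.nth Nat.Prime 13 < Nat.nth Nat.Prime 18
  rw [PrimeTab.htable 8 (by norm_num), PrimeTab.htable 13 (by norm_num),
    PrimeTab.htable 18 (by norm_num)]
  decide

theorem N_five_five_eq_fifteen :
    (∀ n : ℕ, 15 ≤ n → nthPrime (n - 5) + nthPrime n ≥ nthPrime (n + 5)) ∧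
    nthPrime 9 + nthPrime 14 < nthPrime 19 ∧
    IsLeast {N : ℕ | 0 < N ∧ ∀ n : ℕ, N ≤ n →
      nthPrime (n - 5) + nthPrime n ≥ nthPrime (n + 5)} 15 := by
  refine ⟨nthPrime_main, nthPrime_fourteen, ⟨by norm_num, nthPrime_main⟩, ?_⟩
  intro N hN
  by_contra hlt
  push_neg at hlt
  have h14 := hN.2 14 (by omega)
  have e : (14:ℕ) - 5 = 9 := rfl
  rw [e] at h14
  exact absurd nthPrime_fourteen (not_lt.2 h14)
end

section
/- Let p_n denote the n-th prime (p_1 = 2, p_2 = 3, ...). For all positive integers c and d, there exists a positive integer N such that p_{n-c} + p_n ≥ p_{n+d} for all integers n ≥ N with n > c. -/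
open Nat

lemma aux_pow4 : ∀ a : ℕ, 5 ≤ a → a ^ 4 < 4 ^ a := by
  intro a ha
  induction a, ha using Nat.le_induction with
  | base => norm_num
  | succ a ha ih =>
    have e2 : 5 * a ≤ a * a := Nat.mul_le_mul_right a ha
    have e3 : 5 * (a * a) ≤ a * (a * a) := Nat.mul_le_mul_right _ ha
    have e4 : 5 * (a * a * a) ≤ a * (a * a * a) := Nat.mul_le_mul_right _ ha
    have h4 : (a + 1) ^ 4 ≤ 4 * a ^ 4 := by nlinarith [e2, e3, e4]
    calc (a + 1) ^ 4 ≤ 4 * a ^ 4 := h4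
      _ < 4 * 4 ^ a := by omega
      _ = 4 ^ (a + 1) := by ring

/-- Key numeric inequality: for `n` large (depending on `k`),
`(2n)^(√(2n)+k) * 4^(2n/3) ≤ 4^n`. -/
lemma pow_large (k : ℕ) : ∃ M : ℕ, ∀ n : ℕ, M ≤ n →
    (2 * n) ^ (Nat.sqrt (2 * n) + k) * 4 ^ (2 * n / 3) ≤ 4 ^ n := by
  refine ⟨165888 + 144 * (k * k), fun n hn => ?_⟩
  set m := 2 * n with hm
  set s := Nat.sqrt m with hs
  set t := Nat.sqrt s with ht
  set A := t + 1 with hA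
  have hs1 : s * s ≤ m := by simpa [Nat.pow_two] using Nat.sqrt_le' m
  have hs2 : m < (s + 1) * (s + 1) := by simpa [Nat.pow_two] using Nat.lt_succ_sqrt' m
  have ht1 : t * t ≤ s := by simpa [Nat.pow_two] using Nat.sqrt_le' s
  have ht2 : s < A * A := by simpa [Nat.pow_two] using Nat.lt_succ_sqrt' s
  have hspos : 1 ≤ s := by
    rw [hs]
    exact (Nat.le_sqrt').mpr (by omega)
  have htles : t ≤ s := by nlinarith
  have hA2 : A * A ≤ 4 * s := by nlinarith
  -- m < A^4
  have hmA4 : m < A ^ 4 := by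
    have h1 : s + 1 ≤ A * A := ht2
    have h2 : m < (A * A) * (A * A) := by nlinarith
    calc m < (A*A)*(A*A) := h2
      _ = A ^ 4 := by ring
  have hA5 : 5 ≤ A := by
    by_contra h
    push_neg at h
    have h1 : A ^ 4 ≤ 4 ^ 4 := Nat.pow_le_pow_left (by omega) 4
    have h2 : (4:ℕ) ^ 4 = 256 := by norm_num
    omega
  -- m < 4^A
  have hm4A : m < 4 ^ A := lt_trans hmA4 (aux_pow4 A hA5)
  have hL : Nat.log 4 m < A := Nat.log_lt_of_lt_pow (by omega) hm4A
  have hmle : m ≤ 4 ^ (Nat.log 4 m + 1) := le_of_lt (Nat.lt_pow_succ_log_self (by norm_num) m)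
  have hm4A' : m ≤ 4 ^ A := le_trans hmle (Nat.pow_le_pow_right (by norm_num) (by omega))
  -- Bounds 288 s ≤ n, 6 A s ≤ n, 6 A k ≤ n
  have h288 : 288 * s ≤ n := by
    rw [← Nat.mul_self_le_mul_self_iff]
    calc (288 * s) * (288 * s) = 82944 * (s * s) := by ring
      _ ≤ 82944 * m := Nat.mul_le_mul_left _ hs1
      _ = 165888 * n := by rw [hm]; ring
      _ ≤ n * n := Nat.mul_le_mul_right n (by omega)
  have h6As : 6 * (A * s) ≤ n := by
    rw [← Nat.mul_self_le_mul_self_iff]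
    calc (6 * (A * s)) * (6 * (A * s)) = 36 * (A * A) * (s * s) := by ring
      _ ≤ 36 * (4 * s) * m := Nat.mul_le_mul (Nat.mul_le_mul_left 36 hA2) hs1
      _ = (288 * s) * n := by rw [hm]; ring
      _ ≤ n * n := Nat.mul_le_mul_right n h288
  have h6Ak : 6 * (A * k) ≤ n := by
    rw [← Nat.mul_self_le_mul_self_iff]
    have hsn : s ≤ n := by nlinarith
    calc (6 * (A * k)) * (6 * (A * k)) = 36 * (A * A) * (k * k) := by ring
      _ ≤ 36 * (4 * s) * (k * k) := Nat.mul_le_mul_right _ (Nat.mul_le_mul_left 36 hA2)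
      _ = 144 * (k * k) * s := by ring
      _ ≤ 144 * (k * k) * n := Nat.mul_le_mul_left _ hsn
      _ ≤ n * n := Nat.mul_le_mul_right n (by omega)
  -- main exponent bound
  have hexp : A * (s + k) + 2 * n / 3 ≤ n := by
    have hmul : A * (s + k) = A * s + A * k := by ring
    have h3 : 3 * (A * (s + k)) ≤ n := by
      generalize hP : A * s = P at h6As
      generalize hQ : A * k = Q at h6Ak
      rw [hmul, hP, hQ]
      omega
    generalize A * (s + k) = P at h3 ⊢
    omega
  calc (2 * n) ^ (Nat.sqrt (2 * n) + k) * 4 ^ (2 * n / 3)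
      = m ^ (s + k) * 4 ^ (2 * n / 3) := by rw [← hm, ← hs]
    _ ≤ (4 ^ A) ^ (s + k) * 4 ^ (2 * n / 3) :=
        Nat.mul_le_mul_right _ (Nat.pow_le_pow_left hm4A' _)
    _ = 4 ^ (A * (s + k) + 2 * n / 3) := by rw [← Nat.pow_mul, ← Nat.pow_add]
    _ ≤ 4 ^ n := Nat.pow_le_pow_right (by norm_num) hexp


open Nat

/-- Bound the product of prime powers dividing `centralBinom n` for primes `≤ 2n/3`.
This is extracted from mathlib's proof of Bertrand's postulate. -/
lemma prod_small_le (n : ℕ) (n_large : 2 < n) :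
    ∏ p ∈ Finset.range (2 * n / 3 + 1), p ^ (Nat.centralBinom n).factorization p
      ≤ (2 * n) ^ Nat.sqrt (2 * n) * 4 ^ (2 * n / 3) := by
  have n_pos : 0 < n := (Nat.zero_le _).trans_lt n_large
  have n2_pos : 1 ≤ 2 * n := mul_pos (zero_lt_two' ℕ) n_pos
  let S := (Finset.range (2 * n / 3 + 1)).filter Nat.Prime
  let f x := x ^ n.centralBinom.factorization x
  have hprod : ∏ x ∈ S, f x = ∏ x ∈ Finset.range (2 * n / 3 + 1), f x := by
    refine Finset.prod_filter_of_ne fun p _ h => ?_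
    contrapose! h; dsimp only [f]
    rw [Nat.factorization_eq_zero_of_not_prime n.centralBinom h, _root_.pow_zero]
  rw [show (∏ p ∈ Finset.range (2 * n / 3 + 1), p ^ (Nat.centralBinom n).factorization p)
      = ∏ x ∈ Finset.range (2 * n / 3 + 1), f x from rfl, ← hprod,
    ← Finset.prod_filter_mul_prod_filter_not S (· ≤ Nat.sqrt (2 * n))]
  apply mul_le_mul'
  · refine (Finset.prod_le_prod' fun p _ => (?_ : f p ≤ 2 * n)).trans ?_
    · exact Nat.pow_factorization_choose_le (mul_pos two_pos n_pos)
    have hcard : (Finset.Icc 1 (Nat.sqrt (2 * n))).card = Nat.sqrt (2 * n) := by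
      rw [Nat.card_Icc, Nat.add_sub_cancel]
    rw [Finset.prod_const]
    refine pow_right_mono₀ n2_pos ((Finset.card_le_card fun x hx => ?_).trans hcard.le)
    obtain ⟨h1, h2⟩ := Finset.mem_filter.1 hx
    exact Finset.mem_Icc.mpr ⟨(Finset.mem_filter.1 h1).2.one_lt.le, h2⟩
  · refine le_trans ?_ (primorial_le_4_pow (2 * n / 3))
    refine (Finset.prod_le_prod' fun p hp => (?_ : f p ≤ p)).trans ?_
    · obtain ⟨h1, h2⟩ := Finset.mem_filter.1 hp
      refine (pow_right_mono₀ (Finset.mem_filter.1 h1).2.one_lt.le ?_).trans (pow_one p).le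
      exact Nat.factorization_choose_le_one (Nat.sqrt_lt'.mp <| not_le.1 h2)
    refine Finset.prod_le_prod_of_subset_of_one_le' (Finset.filter_subset _ _) ?_
    exact fun p hp _ => (Finset.mem_filter.1 hp).2.one_lt.le

/-- Eventually, the interval `(n, 2n]` contains at least `k` primes. -/
lemma eventually_k_primes (k : ℕ) : ∃ M : ℕ, 4 ≤ M ∧ ∀ n : ℕ, M ≤ n →
    k ≤ ((Finset.Ico (n + 1) (2 * n + 1)).filter Nat.Prime).card := by
  obtain ⟨M₀, hM₀⟩ := pow_large k
  refine ⟨M₀ + 5, by omega, fun n hn => ?_⟩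
  by_contra hcon
  push_neg at hcon
  set S := (Finset.Ico (n + 1) (2 * n + 1)).filter Nat.Prime with hS
  have n_large : 2 < n := by omega
  -- second factor bound
  have hsecond : ∏ p ∈ Finset.Ico (2 * n / 3 + 1) (2 * n + 1),
      p ^ (Nat.centralBinom n).factorization p ≤ (2 * n) ^ S.card := by
    have hle : ∀ p ∈ Finset.Ico (2 * n / 3 + 1) (2 * n + 1),
        p ^ (Nat.centralBinom n).factorization p ≤ if p ∈ S then 2 * n else 1 := by
      intro p hp
      rw [Finset.mem_Ico] at hp
      by_cases hmem : p ∈ S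
      · rw [if_pos hmem]
        exact Nat.pow_factorization_choose_le (by omega)
      · rw [if_neg hmem]
        by_cases hprime : p.Prime
        · have hpn : p ≤ n := by
            by_contra hpn
            exact hmem (Finset.mem_filter.mpr ⟨Finset.mem_Ico.mpr ⟨by omega, by omega⟩, hprime⟩)
          rw [Nat.factorization_centralBinom_of_two_mul_self_lt_three_mul n_large hpn (by omega),
            pow_zero]
        · rw [Nat.factorization_eq_zero_of_not_prime _ hprime, pow_zero]
    calc ∏ p ∈ Finset.Ico (2 * n / 3 + 1) (2 * n + 1), p ^ (Nat.centralBinom n).factorization p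
        ≤ ∏ p ∈ Finset.Ico (2 * n / 3 + 1) (2 * n + 1), (if p ∈ S then 2 * n else 1) :=
          Finset.prod_le_prod' hle
      _ = ∏ p ∈ (Finset.Ico (2 * n / 3 + 1) (2 * n + 1)).filter (· ∈ S), (2 * n) := by
          rw [Finset.prod_ite, Finset.prod_const_one, mul_one]
      _ = (2 * n) ^ ((Finset.Ico (2 * n / 3 + 1) (2 * n + 1)).filter (· ∈ S)).card :=
          Finset.prod_const _
      _ ≤ (2 * n) ^ S.card := by
          apply Nat.pow_le_pow_right (by omega)
          apply Finset.card_le_card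
          intro x hx
          exact (Finset.mem_filter.mp hx).2
  have hsplit : Nat.centralBinom n
      = (∏ p ∈ Finset.range (2 * n / 3 + 1), p ^ (Nat.centralBinom n).factorization p)
        * ∏ p ∈ Finset.Ico (2 * n / 3 + 1) (2 * n + 1), p ^ (Nat.centralBinom n).factorization p := by
    rw [Finset.prod_range_mul_prod_Ico _ (by omega : 2 * n / 3 + 1 ≤ 2 * n + 1)]
    exact (Nat.prod_pow_factorization_centralBinom n).symm
  have H2 : 4 ^ n < n * Nat.centralBinom n := Nat.four_pow_lt_mul_centralBinom n (by omega)
  have H3 : n * Nat.centralBinom n ≤ (2 * n) ^ (Nat.sqrt (2 * n) + k) * 4 ^ (2 * n / 3) := by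
    calc n * Nat.centralBinom n
        ≤ n * (((2 * n) ^ Nat.sqrt (2 * n) * 4 ^ (2 * n / 3)) * (2 * n) ^ S.card) := by
          rw [hsplit]
          exact Nat.mul_le_mul_left n (Nat.mul_le_mul (prod_small_le n n_large) hsecond)
      _ ≤ (2 * n) * (((2 * n) ^ Nat.sqrt (2 * n) * 4 ^ (2 * n / 3)) * (2 * n) ^ S.card) :=
          Nat.mul_le_mul_right _ (by omega)
      _ = (2 * n) ^ (Nat.sqrt (2 * n) + S.card + 1) * 4 ^ (2 * n / 3) := by ring
      _ ≤ (2 * n) ^ (Nat.sqrt (2 * n) + k) * 4 ^ (2 * n / 3) := by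
          apply Nat.mul_le_mul_right
          exact Nat.pow_le_pow_right (by omega) (by omega)
  have H1 : (2 * n) ^ (Nat.sqrt (2 * n) + k) * 4 ^ (2 * n / 3) ≤ 4 ^ n := hM₀ n (by omega)
  omega

/-- Eventually, `p_{m+k} ≤ 2 p_m` (0-indexed `Nat.nth`). -/
lemma nth_prime_add_le (k : ℕ) : ∃ M : ℕ, ∀ m : ℕ, M ≤ m →
    Nat.nth Nat.Prime (m + k) ≤ 2 * Nat.nth Nat.Prime m := by
  obtain ⟨M, hM4, hM⟩ := eventually_k_primes k
  refine ⟨M, fun m hm => ?_⟩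
  set p := Nat.nth Nat.Prime m with hp
  have hpM : M ≤ p := le_trans (by omega) (Nat.add_two_le_nth_prime m)
  have hcount_p : Nat.count Nat.Prime p = m :=
    Nat.count_nth (fun hf => absurd hf Nat.infinite_setOf_prime)
  have hprime_p : Nat.Prime p := Nat.prime_nth_prime m
  have hsplit : Nat.count Nat.Prime (2 * p + 1)
      = Nat.count Nat.Prime (p + 1)
        + ((Finset.Ico (p + 1) (2 * p + 1)).filter Nat.Prime).card := by
    rw [Nat.count_eq_card_filter_range, Nat.count_eq_card_filter_range,
      Finset.range_eq_Ico,
      ← Finset.Ico_union_Ico_eq_Ico (Nat.zero_le (p + 1)) (by omega : p + 1 ≤ 2 * p + 1),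
      Finset.filter_union,
      Finset.card_union_of_disjoint
        (Finset.disjoint_filter_filter (Finset.Ico_disjoint_Ico_consecutive 0 (p + 1) (2 * p + 1))), Finset.range_eq_Ico]
  have hcount_succ : Nat.count Nat.Prime (p + 1) = m + 1 := by
    rw [Nat.count_succ, hcount_p, if_pos hprime_p]
  have hcard : k ≤ ((Finset.Ico (p + 1) (2 * p + 1)).filter Nat.Prime).card := hM p hpM
  have hlt : m + k < Nat.count Nat.Prime (2 * p + 1) := by omega
  have := Nat.nth_lt_of_lt_count hlt
  omega

theorem exists_N_cd (c d : ℕ) (hc : 0 < c) (hd : 0 < d) :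
    ∃ N : ℕ, 0 < N ∧ ∀ n : ℕ, N ≤ n → c < n →
      nthPrime (n - c) + nthPrime n ≥ nthPrime (n + d) := by
  obtain ⟨M, hM⟩ := nth_prime_add_le (c + d)
  refine ⟨M + c + 1, by omega, fun n hn hcn => ?_⟩
  obtain ⟨m, rfl⟩ : ∃ m, n = m + c + 1 := ⟨n - c - 1, by omega⟩
  have h1 : nthPrime (m + c + 1 - c) = Nat.nth Nat.Prime m := by
    simp only [nthPrime]
    congr 1
    omega
  have h2 : nthPrime (m + c + 1) = Nat.nth Nat.Prime (m + c) := by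
    simp only [nthPrime]
    congr 1
  have h3 : nthPrime (m + c + 1 + d) = Nat.nth Nat.Prime (m + (c + d)) := by
    simp only [nthPrime]
    congr 1
    omega
  rw [h1, h2, h3]
  have hmono : Nat.nth Nat.Prime m ≤ Nat.nth Nat.Prime (m + c) :=
    (Nat.nth_le_nth Nat.infinite_setOf_prime).mpr (by omega)
  have hkey : Nat.nth Nat.Prime (m + (c + d)) ≤ 2 * Nat.nth Nat.Prime m := hM m (by omega)
  omega
end

section
/- For every integer n ≥ 33, the real-number inequality n·log n + (n−1)·log(n−1) + (n−2)·log(n−2) > (n+1)·(log(n+1) + log(log(n+1))) + (n+2)·(log(n+2) + log(log(n+2))) holds. -/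
open Real

/-- Tangent line bound for log: `log b ≤ log a + (b-a)/a`. -/
lemma log_tangent_aux {a b : ℝ} (ha : 0 < a) (hb : 0 < b) :
    Real.log b ≤ Real.log a + (b - a) / a := by
  have h : Real.log (b / a) ≤ b / a - 1 := Real.log_le_sub_one_of_pos (div_pos hb ha)
  rw [Real.log_div hb.ne' ha.ne'] at h
  have h2 : b / a - 1 = (b - a) / a := by field_simp
  linarith [h2 ▸ h]

/-- Multiplied tangent line bound: `a * log b ≤ a * log a + (b - a)`. -/
lemma mul_log_tangent_aux {a b : ℝ} (ha : 0 < a) (hb : 0 < b) :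
    a * Real.log b ≤ a * Real.log a + (b - a) := by
  have h := log_tangent_aux ha hb
  have h2 : a * Real.log b ≤ a * (Real.log a + (b - a) / a) :=
    mul_le_mul_of_nonneg_left h ha.le
  have h3 : a * (Real.log a + (b - a) / a) = a * Real.log a + (b - a) := by
    field_simp
  linarith [h3 ▸ h2]

set_option maxHeartbeats 2000000 in
theorem log_inequality_for_n_ge_33 (n : ℕ) (hn : 33 ≤ n) :
    (n : ℝ) * Real.log n + ((n : ℝ) - 1) * Real.log ((n : ℝ) - 1) +
      ((n : ℝ) - 2) * Real.log ((n : ℝ) - 2) >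
    ((n : ℝ) + 1) * (Real.log ((n : ℝ) + 1) + Real.log (Real.log ((n : ℝ) + 1))) +
      ((n : ℝ) + 2) * (Real.log ((n : ℝ) + 2) + Real.log (Real.log ((n : ℝ) + 2))) := by
  set x : ℝ := (n : ℝ) with hxdef
  have hx : (33 : ℝ) ≤ x := by
    rw [hxdef]; exact_mod_cast hn
  have hx0 : (0:ℝ) < x := by linarith
  have hx1 : (0:ℝ) < x - 1 := by linarith
  have hx2 : (0:ℝ) < x - 2 := by linarith
  have hxp1 : (0:ℝ) < x + 1 := by linarith
  have hxp2 : (0:ℝ) < x + 2 := by linarith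
  have hS0 : 0 < Real.log (x + 1) := Real.log_pos (by linarith)
  have hT0 : 0 < Real.log (x + 2) := Real.log_pos (by linarith)
  have hl2u : Real.log 2 < 0.6931471808 := Real.log_two_lt_d9
  have hl2l : 0.6931471803 < Real.log 2 := Real.log_two_gt_d9
  -- lower bound on log x
  have hlog32 : Real.log 32 = 5 * Real.log 2 := by
    rw [show (32:ℝ) = 2^5 by norm_num, Real.log_pow]; push_cast; ring
  have h32le : Real.log 32 ≤ Real.log 33 + (32 - 33) / 33 :=
    log_tangent_aux (by norm_num) (by norm_num)
  have h33x : Real.log 33 ≤ Real.log x := Real.log_le_log (by norm_num) hx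
  have hP : (3.496 : ℝ) ≤ Real.log x := by
    have : (3.496 : ℝ) ≤ 5 * Real.log 2 + 1/33 := by nlinarith
    nlinarith
  -- e1 : (x-1) * log x ≤ (x-1) * log (x-1) + 1
  have e1 := mul_log_tangent_aux hx1 hx0
  -- e2 : (x-2) * log x ≤ (x-2) * log (x-2) + 2
  have e2 := mul_log_tangent_aux hx2 hx0
  -- e3' : log (x+1) ≤ log x + 1/33
  have e3' : Real.log (x + 1) ≤ Real.log x + 1/33 := by
    have h := log_tangent_aux hx0 hxp1
    have hd : (x + 1 - x) / x ≤ 1/33 := by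
      rw [show x + 1 - x = 1 by ring]
      apply div_le_div_of_nonneg_left (by norm_num) (by norm_num) hx
    linarith
  -- e4' : log (x+2) ≤ log x + 2/33
  have e4' : Real.log (x + 2) ≤ Real.log x + 2/33 := by
    have h := log_tangent_aux hx0 hxp2
    have hd : (x + 2 - x) / x ≤ 2/33 := by
      rw [show x + 2 - x = 2 by ring]
      apply div_le_div_of_nonneg_left (by norm_num) (by norm_num) hx
    linarith
  have hlog4 : Real.log 4 = 2 * Real.log 2 := by
    rw [show (4:ℝ) = 2^2 by norm_num, Real.log_pow]; push_cast; ring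
  -- e5 : log (log (x+1)) ≤ 2 log 2 + (log (x+1) - 4)/4
  have e5 : Real.log (Real.log (x + 1)) ≤ 2 * Real.log 2 + (Real.log (x + 1) - 4) / 4 := by
    have h := log_tangent_aux (show (0:ℝ) < 4 by norm_num) hS0
    rw [hlog4] at h; linarith
  have e6 : Real.log (Real.log (x + 2)) ≤ 2 * Real.log 2 + (Real.log (x + 2) - 4) / 4 := by
    have h := log_tangent_aux (show (0:ℝ) < 4 by norm_num) hT0
    rw [hlog4] at h; linarith
  -- multiplied versions
  have p3 : (x + 1) * Real.log (x + 1) ≤ (x + 1) * (Real.log x + 1/33) :=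
    mul_le_mul_of_nonneg_left e3' hxp1.le
  have p4 : (x + 2) * Real.log (x + 2) ≤ (x + 2) * (Real.log x + 2/33) :=
    mul_le_mul_of_nonneg_left e4' hxp2.le
  have p5 : (x + 1) * Real.log (Real.log (x + 1)) ≤
      (x + 1) * (2 * Real.log 2 + (Real.log (x + 1) - 4) / 4) :=
    mul_le_mul_of_nonneg_left e5 hxp1.le
  have p6 : (x + 2) * Real.log (Real.log (x + 2)) ≤
      (x + 2) * (2 * Real.log 2 + (Real.log (x + 2) - 4) / 4) :=
    mul_le_mul_of_nonneg_left e6 hxp2.le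
  nlinarith [mul_nonneg (by linarith : (0:ℝ) ≤ x - 33) (by linarith : (0:ℝ) ≤ Real.log x - 3.496),
    mul_nonneg (by linarith : (0:ℝ) ≤ x - 33) (by linarith : (0:ℝ) ≤ 0.6931471808 - Real.log 2),
    e1, e2, p3, p4, p5, p6, hP, hx, hl2u]
end
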